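/- arXiv:1108.3494 — 5 statements merged into one kernel-verified Lean document; each statement's English description precedes it below -/
import Mathlib

section
/- For every natural number k ≥ 1, let n = 4k+2 and let g : {0,1}^n → {0,1} be the pattern function: g(x) = 1 iff there exists j ∈ [2k+1] such that x satisfies pattern P_j, where P_j requires x_{2j-1} = x_{2j} = 1 and, for all i ∈ [k], x_{2j+2i} = 0 and x_{2j-2i-1} = x_{2j-2i} = 0 (all indices taken modulo n). Then the 1-sensitivity of g equals 3k+2, i.e., s_1(g) = 3k+2. -/
section Defs

variable {ι : Type} [Fintype ι] [DecidableEq ι]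

/-- `flipBit x i` is `x` with its `i`-th bit flipped. -/
def flipBit (x : ι → Bool) (i : ι) : ι → Bool :=
  Function.update x i (!x i)

/-- `flipBlock x B` is `x` with all bits indexed by `B` flipped. -/
def flipBlock (x : ι → Bool) (B : Finset ι) : ι → Bool :=
  fun j => if j ∈ B then !x j else x j

/-- The sensitivity of `f` at `x`: the number of `i` with `f (x^(i)) ≠ f x`. -/
def sensAt (f : (ι → Bool) → Bool) (x : ι → Bool) : ℕ :=
  (Finset.univ.filter fun i => f (flipBit x i) ≠ f x).card

/-- The sensitivity `s(f) = max_x s(f,x)`. -/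
def sens (f : (ι → Bool) → Bool) : ℕ :=
  Finset.univ.sup (sensAt f)

/-- The 0-sensitivity `s₀(f) = max_{x : f x = 0} s(f,x)`. -/
def sens0 (f : (ι → Bool) → Bool) : ℕ :=
  (Finset.univ.filter fun x => f x = false).sup (sensAt f)

/-- The 1-sensitivity `s₁(f) = max_{x : f x = 1} s(f,x)`. -/
def sens1 (f : (ι → Bool) → Bool) : ℕ :=
  (Finset.univ.filter fun x => f x = true).sup (sensAt f)

/-- The block sensitivity of `f` at `x`: the largest `b` such that there are
`b` pairwise disjoint blocks on which flipping `x` changes the value of `f`. -/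
noncomputable def bsAt (f : (ι → Bool) → Bool) (x : ι → Bool) : ℕ :=
  sSup {b : ℕ | ∃ Bl : Fin b → Finset ι,
    (Pairwise fun p q => Disjoint (Bl p) (Bl q)) ∧
    ∀ p, f (flipBlock x (Bl p)) ≠ f x}

/-- The block sensitivity `bs(f) = max_x bs(f,x)`. -/
noncomputable def bs (f : (ι → Bool) → Bool) : ℕ :=
  Finset.univ.sup (bsAt f)

/-- The 0-block-sensitivity `bs₀(f) = max_{x : f x = 0} bs(f,x)`. -/
noncomputable def bs0 (f : (ι → Bool) → Bool) : ℕ :=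
  (Finset.univ.filter fun x => f x = false).sup (bsAt f)

end Defs

/-- The coordinate of `{0,1}^{4k+2}` with (1-based) index `t`, taken modulo `4k+2`. -/
def pidx (k : ℕ) (t : ℤ) : Fin (4*k+2) :=
  ⟨(t % (4*(k:ℤ)+2)).toNat, by
    have h0 : (0:ℤ) < 4*(k:ℤ)+2 := by positivity
    have h1 := Int.emod_nonneg t (ne_of_gt h0)
    have h2 := Int.emod_lt_of_pos t h0
    omega⟩

/-- `x` satisfies the pattern `P_j`: `x_{2j-1} = x_{2j} = 1` and, for all `i ∈ [k]`,
`x_{2j+2i} = 0` and `x_{2j-2i-1} = x_{2j-2i} = 0`, indices taken modulo `4k+2`. -/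
def SatPat (k : ℕ) (j : ℤ) (x : Fin (4*k+2) → Bool) : Prop :=
  x (pidx k (2*j-1)) = true ∧ x (pidx k (2*j)) = true ∧
  ∀ i : ℤ, 1 ≤ i → i ≤ (k:ℤ) →
    x (pidx k (2*j+2*i)) = false ∧
    x (pidx k (2*j-2*i-1)) = false ∧
    x (pidx k (2*j-2*i)) = false

namespace PatAux

variable (k : ℕ)

lemma pidx_cast (t : ℤ) : ((pidx k t : Fin (4*k+2)) : ℕ) = (t % (4*(k:ℤ)+2)).toNat := rfl

lemma pidx_valZ (t : ℤ) : (((pidx k t : Fin (4*k+2)) : ℕ) : ℤ) = t % (4*(k:ℤ)+2) := by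
  rw [pidx_cast]
  exact Int.toNat_of_nonneg (Int.emod_nonneg _ (by positivity))

lemma pidx_val (t r : ℤ) (h0 : 0 ≤ r) (h1 : r < 4*(k:ℤ)+2) (hd : (4*(k:ℤ)+2) ∣ (t - r)) :
    (((pidx k t : Fin (4*k+2)) : ℕ) : ℤ) = r := by
  rw [pidx_valZ]
  obtain ⟨c, hc⟩ := hd
  have ht : t = r + (4*(k:ℤ)+2) * c := by linarith
  rw [ht, Int.add_mul_emod_self_left, Int.emod_eq_of_lt h0 h1]

lemma pidx_parity (t : ℤ) : (((pidx k t : Fin (4*k+2)) : ℕ) : ℤ) % 2 = t % 2 := by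
  rw [pidx_valZ]
  exact Int.emod_emod_of_dvd t ⟨2*(k:ℤ)+1, by ring⟩

lemma pidx_inj (a b : ℤ) (h : pidx k a = pidx k b) : (4*(k:ℤ)+2) ∣ (a - b) := by
  have hv : a % (4*(k:ℤ)+2) = b % (4*(k:ℤ)+2) := by
    rw [← pidx_valZ k a, ← pidx_valZ k b, h]
  exact Int.dvd_of_emod_eq_zero (Int.emod_eq_emod_iff_emod_sub_eq_zero.mp hv)

lemma pidx_congr (a b : ℤ) (h : a = b) : pidx k a = pidx k b := by rw [h]

lemma small_mul_eq_zero {N a c : ℤ} (hN : 0 < N) (h : a = N * c) (h1 : -N < a) (h2 : a < N) :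
    a = 0 := by
  rcases lt_trichotomy c 0 with hc | hc | hc
  · exfalso; nlinarith
  · simp [hc] at h; exact h
  · exfalso; nlinarith

/-- The even coordinates. -/
def evens : Finset (Fin (4*k+2)) := Finset.univ.filter (fun v => (v : ℕ) % 2 = 0)

/-- The fixed odd coordinates of pattern `P_j`. -/
def oddsF (j : ℤ) : Finset (Fin (4*k+2)) :=
  (Finset.range (k+1)).image (fun t : ℕ => pidx k (2*j-1-2*(t:ℤ)))

/-- All fixed coordinates of pattern `P_j`. -/
def Fix (j : ℤ) : Finset (Fin (4*k+2)) := evens k ∪ oddsF k j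

lemma card_evens : (evens k).card = 2*k+1 := by
  have key : ∀ m : ℕ, m < 2*k+1 → ((pidx k (2*(m:ℤ)) : Fin (4*k+2)) : ℕ) = 2*m := by
    intro m hm
    have := pidx_val k (2*(m:ℤ)) (2*(m:ℤ)) (by positivity) (by push_cast; omega) (by simp)
    omega
  have he : evens k = (Finset.range (2*k+1)).image (fun m : ℕ => pidx k (2*(m:ℤ))) := by
    ext v
    simp only [evens, Finset.mem_filter, Finset.mem_univ, true_and, Finset.mem_image]
    constructor
    · intro h
      have := v.isLt
      refine ⟨(v : ℕ) / 2, Finset.mem_range.mpr (by omega), ?_⟩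
      apply Fin.ext
      rw [key _ (by omega)]
      omega
    · rintro ⟨m, hm, rfl⟩
      rw [Finset.mem_range] at hm
      rw [key _ hm]
      omega
  rw [he, Finset.card_image_of_injOn, Finset.card_range]
  intro a ha b hb h
  simp only [Finset.coe_range, Set.mem_Iio] at ha hb
  have hv := congrArg Fin.val h
  rw [key a ha, key b hb] at hv
  omega

lemma card_oddsF (j : ℤ) : (oddsF k j).card = k+1 := by
  rw [oddsF, Finset.card_image_of_injOn, Finset.card_range]
  intro a ha b hb h
  simp only [Finset.coe_range, Set.mem_Iio] at ha hb
  have hd := pidx_inj k _ _ h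
  obtain ⟨c, hc⟩ := hd
  have h2 : 2*(b:ℤ) - 2*(a:ℤ) = (4*(k:ℤ)+2) * c := by linarith
  have := small_mul_eq_zero (by positivity) h2 (by omega) (by omega)
  omega

lemma disj_evens_oddsF (j : ℤ) : Disjoint (evens k) (oddsF k j) := by
  rw [Finset.disjoint_left]
  intro v hv hv2
  simp only [evens, Finset.mem_filter, Finset.mem_univ, true_and] at hv
  simp only [oddsF, Finset.mem_image, Finset.mem_range] at hv2
  obtain ⟨t, ht, rfl⟩ := hv2
  have hp := pidx_parity k (2*j-1-2*(t:ℤ))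
  omega

lemma card_Fix (j : ℤ) : (Fix k j).card = 3*k+2 := by
  rw [Fix, Finset.card_union_of_disjoint (disj_evens_oddsF k j), card_evens, card_oddsF]
  omega

lemma mem_Fix_even (j a : ℤ) (h : a % 2 = 0) : pidx k a ∈ Fix k j := by
  refine Finset.mem_union_left _ ?_
  simp only [evens, Finset.mem_filter, Finset.mem_univ, true_and]
  have hp := pidx_parity k a
  omega

lemma mem_Fix_odd (j a : ℤ) (h : ∃ t : ℤ, 0 ≤ t ∧ t ≤ (k:ℤ) ∧ a = 2*j-1-2*t) :
    pidx k a ∈ Fix k j := by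
  obtain ⟨t, h0, h1, rfl⟩ := h
  refine Finset.mem_union_right _ ?_
  simp only [oddsF, Finset.mem_image, Finset.mem_range]
  exact ⟨t.toNat, by omega, pidx_congr k _ _ (by omega)⟩

lemma satpat_agree (j : ℤ) (x y : Fin (4*k+2) → Bool)
    (h : ∀ v ∈ Fix k j, y v = x v) (hs : SatPat k j x) : SatPat k j y := by
  obtain ⟨h1, h2, h3⟩ := hs
  refine ⟨?_, ?_, fun i hi1 hik => ⟨?_, ?_, ?_⟩⟩
  · rw [h _ (mem_Fix_odd k j _ ⟨0, le_refl _, by exact_mod_cast Nat.cast_nonneg k, by ring⟩)]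
    exact h1
  · rw [h _ (mem_Fix_even k j _ (by omega))]; exact h2
  · rw [h _ (mem_Fix_even k j _ (by omega))]; exact (h3 i hi1 hik).1
  · rw [h _ (mem_Fix_odd k j _ ⟨i, by omega, hik, by ring⟩)]; exact (h3 i hi1 hik).2.1
  · rw [h _ (mem_Fix_even k j _ (by omega))]; exact (h3 i hi1 hik).2.2

lemma even_covered (j : ℤ) (v : Fin (4*k+2)) (hv : (v:ℕ) % 2 = 0) :
    v = pidx k (2*j) ∨ (∃ i : ℤ, 1 ≤ i ∧ i ≤ (k:ℤ) ∧ v = pidx k (2*j+2*i)) ∨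
      (∃ i : ℤ, 1 ≤ i ∧ i ≤ (k:ℤ) ∧ v = pidx k (2*j-2*i)) := by
  have hlt := v.isLt
  obtain ⟨s, hs0, hs1, hs2⟩ : ∃ s : ℤ, 0 ≤ s ∧ s ≤ 2*(k:ℤ) ∧ ((v:ℕ):ℤ) = 2*s :=
    ⟨((v:ℕ):ℤ)/2, by omega, by omega, by omega⟩
  obtain ⟨u, q, hu0, hu1, huq⟩ : ∃ u q : ℤ, 0 ≤ u ∧ u < 2*(k:ℤ)+1 ∧
      s - j - u = (2*(k:ℤ)+1)*q :=
    ⟨(s-j) % (2*(k:ℤ)+1), (s-j)/(2*(k:ℤ)+1),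
      Int.emod_nonneg _ (by positivity),
      Int.emod_lt_of_pos _ (by positivity),
      by linarith [Int.mul_ediv_add_emod (s-j) (2*(k:ℤ)+1)]⟩
  by_cases htu : u ≤ (k:ℤ)
  · have hdvd : (4*(k:ℤ)+2) ∣ ((2*j+2*u) - 2*s) := ⟨-q, by linear_combination (-2)*huq⟩
    have hveq : v = pidx k (2*j+2*u) := by
      apply Fin.ext
      have hp := pidx_val k (2*j+2*u) (2*s) (by linarith) (by linarith) hdvd
      omega
    by_cases hu00 : u = 0
    · left; rw [hveq, hu00]; exact pidx_congr k _ _ (by ring)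
    · right; left; exact ⟨u, by omega, htu, hveq⟩
  · have hdvd : (4*(k:ℤ)+2) ∣ ((2*j-2*((2*(k:ℤ)+1)-u)) - 2*s) :=
      ⟨-q-1, by linear_combination (-2)*huq⟩
    right; right
    refine ⟨(2*(k:ℤ)+1) - u, by omega, by omega, ?_⟩
    apply Fin.ext
    have hp := pidx_val k (2*j-2*((2*(k:ℤ)+1)-u)) (2*s) (by linarith) (by linarith) hdvd
    omega

lemma even_true (j : ℤ) (y : Fin (4*k+2) → Bool) (hs : SatPat k j y) (v : Fin (4*k+2))
    (hv : (v:ℕ) % 2 = 0) (hvy : y v = true) : v = pidx k (2*j) := by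
  rcases even_covered k j v hv with h | ⟨i, h1, h2, rfl⟩ | ⟨i, h1, h2, rfl⟩
  · exact h
  · rw [(hs.2.2 i h1 h2).1] at hvy; exact absurd hvy (by simp)
  · rw [(hs.2.2 i h1 h2).2.2] at hvy; exact absurd hvy (by simp)

/-- The witness input for the lower bound. -/
def x0 : Fin (4*k+2) → Bool :=
  fun v => decide ((v:ℕ) = 2 ∨ ((v:ℕ) % 2 = 1 ∧ (v:ℕ) ≤ 2*k+1))

lemma x0_true_iff (v : Fin (4*k+2)) :
    x0 k v = true ↔ ((v:ℕ) = 2 ∨ ((v:ℕ) % 2 = 1 ∧ (v:ℕ) ≤ 2*k+1)) := by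
  simp [x0]

lemma x0_false_iff (v : Fin (4*k+2)) :
    x0 k v = false ↔ ¬((v:ℕ) = 2 ∨ ((v:ℕ) % 2 = 1 ∧ (v:ℕ) ≤ 2*k+1)) := by
  simp [x0]

lemma x0_sat (hk : 1 ≤ k) : SatPat k 1 (x0 k) := by
  refine ⟨?_, ?_, fun i hi1 hik => ⟨?_, ?_, ?_⟩⟩
  · have hp := pidx_val k (2*1-1) 1 (by norm_num) (by push_cast; omega) (by norm_num)
    rw [x0_true_iff]; omega
  · have hp := pidx_val k (2*1) 2 (by norm_num) (by push_cast; omega) (by norm_num)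
    rw [x0_true_iff]; omega
  · have hp := pidx_val k (2*1+2*i) (2+2*i) (by omega) (by push_cast; omega)
      ⟨0, by ring⟩
    rw [x0_false_iff]; omega
  · have hp := pidx_val k (2*1-2*i-1) (4*(k:ℤ)+3-2*i) (by omega) (by omega)
      ⟨-1, by ring⟩
    rw [x0_false_iff]; omega
  · rcases eq_or_lt_of_le hi1 with h1 | h1
    · have hp := pidx_val k (2*1-2*i) 0 (by norm_num) (by positivity) ⟨0, by omega⟩
      rw [x0_false_iff]; omega
    · have hp := pidx_val k (2*1-2*i) (4*(k:ℤ)+4-2*i) (by omega) (by omega)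
        ⟨-1, by ring⟩
      rw [x0_false_iff]; omega

lemma flip_false (hk : 1 ≤ k) (i : Fin (4*k+2)) (hi : i ∈ Fix k 1) (j : ℤ) (hj1 : 1 ≤ j)
    (hj2 : j ≤ 2*(k:ℤ)+1) : ¬ SatPat k j (flipBit (x0 k) i) := by
  intro hs
  set y := flipBit (x0 k) i with hy
  have hyv : ∀ v, v ≠ i → y v = x0 k v := fun v hv => Function.update_of_ne hv _ _
  have hyi : y i = !x0 k i := Function.update_self _ _ _
  have hp2 : (((pidx k 2 : Fin (4*k+2)) : ℕ) : ℤ) = 2 :=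
    pidx_val k 2 2 (by norm_num) (by push_cast; omega) (by norm_num)
  have hx0p2 : x0 k (pidx k 2) = true := by rw [x0_true_iff]; omega
  have h2j := hs.2.1
  have h2je : ((pidx k (2*j) : Fin (4*k+2)) : ℕ) % 2 = 0 := by
    have := pidx_parity k (2*j); omega
  rcases Finset.mem_union.mp hi with hie | hio
  · -- i is even
    simp only [evens, Finset.mem_filter, Finset.mem_univ, true_and] at hie
    by_cases hi2 : (i:ℕ) = 2
    · -- i is the position 2; then all even coordinates of y are false
      by_cases hpe : pidx k (2*j) = i
      · rw [hpe, hyi] at h2j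
        have : x0 k i = true := by rw [x0_true_iff]; omega
        rw [this] at h2j; simp at h2j
      · rw [hyv _ hpe] at h2j
        rw [x0_true_iff] at h2j
        have hne : ((pidx k (2*j) : Fin (4*k+2)) : ℕ) ≠ 2 := by
          intro hc; exact hpe (Fin.ext (by omega))
        omega
    · -- i is an even position other than 2
      have hx0i : x0 k i = false := by rw [x0_false_iff]; omega
      have hyit : y i = true := by rw [hyi, hx0i]; rfl
      have h1 : i = pidx k (2*j) := even_true k j y hs i hie hyit
      have hne : (pidx k 2 : Fin (4*k+2)) ≠ i := by
        intro hc; apply hi2; rw [← hc]; omega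
      have hyp2 : y (pidx k 2) = true := by rw [hyv _ hne]; exact hx0p2
      have h2 : pidx k 2 = pidx k (2*j) := even_true k j y hs _ (by omega) hyp2
      rw [← h2] at h1
      apply hi2
      rw [h1]
      omega
  · -- i is a fixed odd position of P₁
    simp only [oddsF, Finset.mem_image, Finset.mem_range] at hio
    obtain ⟨t, ht, hti⟩ := hio
    have hiodd : ((i : Fin (4*k+2)) : ℕ) % 2 = 1 := by
      have := pidx_parity k (2*(1:ℤ)-1-2*(t:ℤ))
      rw [hti] at this
      omega
    have hne : (pidx k 2 : Fin (4*k+2)) ≠ i := by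
      intro hc
      have := congrArg (fun v : Fin (4*k+2) => ((v:ℕ):ℤ)) hc
      omega
    have hyp2 : y (pidx k 2) = true := by rw [hyv _ hne]; exact hx0p2
    have h2 : pidx k 2 = pidx k (2*j) := even_true k j y hs _ (by omega) hyp2
    -- deduce j = 1
    have hj : j = 1 := by
      have hd := pidx_inj k 2 (2*j) h2
      obtain ⟨c, hc⟩ := hd
      have h2' : 2 - 2*j = (4*(k:ℤ)+2) * c := hc
      have := small_mul_eq_zero (N := 4*(k:ℤ)+2) (by positivity) h2' (by omega) (by omega)
      omega
    subst hj
    by_cases ht0 : t = 0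
    · subst ht0
      have hval := pidx_val k (2*(1:ℤ)-1-2*((0:ℕ):ℤ)) 1 (by norm_num)
        (by push_cast; omega) ⟨0, by norm_num⟩
      rw [hti] at hval
      have hx0i : x0 k i = true := by rw [x0_true_iff]; omega
      have h11 : pidx k (2*(1:ℤ)-1) = i := by
        rw [← hti]; exact pidx_congr k _ _ (by norm_num)
      have := hs.1
      rw [h11, hyi, hx0i] at this
      simp at this
    · have ht1 : 1 ≤ (t:ℤ) := by omega
      have htk : (t:ℤ) ≤ (k:ℤ) := by omega
      have hcl := (hs.2.2 (t:ℤ) ht1 htk).2.1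
      have harg : pidx k (2*(1:ℤ)-2*(t:ℤ)-1) = i := by
        rw [← hti]; exact pidx_congr k _ _ (by push_cast; ring)
      rw [harg, hyi] at hcl
      have hval := pidx_val k (2*(1:ℤ)-1-2*(t:ℤ)) (4*(k:ℤ)+3-2*(t:ℤ)) (by omega)
        (by omega) ⟨-1, by ring⟩
      rw [hti] at hval
      have hx0i : x0 k i = false := by rw [x0_false_iff]; omega
      rw [hx0i] at hcl
      simp at hcl

end PatAux

/-- For `k ≥ 1`, the pattern function `g` on `{0,1}^{4k+2}` (with `g x = 1` iff `x`
satisfies some pattern `P_j`, `j ∈ [2k+1]`) has 1-sensitivity `s₁(g) = 3k+2`. -/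
theorem sens1_pattern_function (k : ℕ) (hk : 1 ≤ k)
    (g : (Fin (4*k+2) → Bool) → Bool)
    (hg : ∀ x, g x = true ↔ ∃ j : ℤ, 1 ≤ j ∧ j ≤ 2*(k:ℤ)+1 ∧ SatPat k j x) :
    sens1 g = 3*k+2 := by
  open PatAux in
  refine ?_
  apply le_antisymm
  · -- upper bound
    rw [sens1]
    apply Finset.sup_le
    intro x hx
    rw [Finset.mem_filter] at hx
    obtain ⟨-, hxt⟩ := hx
    obtain ⟨j, hj1, hj2, hsat⟩ := (hg x).mp hxt
    have hsub : (Finset.univ.filter fun i => g (flipBit x i) ≠ g x) ⊆ Fix k j := by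
      intro i hif
      rw [Finset.mem_filter] at hif
      by_contra hin
      apply hif.2
      have hagree : ∀ v ∈ Fix k j, flipBit x i v = x v := by
        intro v hv
        have hvi : v ≠ i := by rintro rfl; exact hin hv
        exact Function.update_of_ne hvi _ _
      have : g (flipBit x i) = true :=
        (hg _).mpr ⟨j, hj1, hj2, satpat_agree k j x _ hagree hsat⟩
      rw [this, hxt]
    calc sensAt g x ≤ (Fix k j).card := Finset.card_le_card hsub
      _ = 3*k+2 := card_Fix k j
  · -- lower bound
    have hx0t : g (x0 k) = true :=
      (hg _).mpr ⟨1, le_refl _, by push_cast; omega, x0_sat k hk⟩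
    have hmem : x0 k ∈ Finset.univ.filter (fun x => g x = true) :=
      Finset.mem_filter.mpr ⟨Finset.mem_univ _, hx0t⟩
    refine le_trans ?_ (Finset.le_sup hmem)
    have hsub : Fix k 1 ⊆ (Finset.univ.filter fun i => g (flipBit (x0 k) i) ≠ g (x0 k)) := by
      intro i hi
      rw [Finset.mem_filter]
      refine ⟨Finset.mem_univ _, ?_⟩
      intro hc
      rw [hx0t] at hc
      obtain ⟨j, hj1, hj2, hsat⟩ := (hg _).mp hc
      exact flip_false k hk i hi j hj1 hj2 hsat
    calc 3*k+2 = (Fix k 1).card := (card_Fix k 1).symm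
      _ ≤ _ := Finset.card_le_card hsub
end

section
/- For every natural number k ≥ 1, let n = 4k+2 and let g : {0,1}^n → {0,1} be the pattern function: g(x) = 1 iff there exists j ∈ [2k+1] such that x satisfies pattern P_j, where P_j requires x_{2j-1} = x_{2j} = 1 and, for all i ∈ [k], x_{2j+2i} = 0 and x_{2j-2i-1} = x_{2j-2i} = 0 (all indices taken modulo n). Then the 0-sensitivity of g equals 1, i.e., s_0(g) = 1. -/
section Aux

lemma pidx_eq_iff {k : ℕ} {a b : ℤ} :
    pidx k a = pidx k b ↔ (4*(k:ℤ)+2) ∣ (a - b) := by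
  have h0 : (0:ℤ) < 4*(k:ℤ)+2 := by positivity
  constructor
  · intro h
    have hv := congrArg Fin.val h
    simp only [pidx] at hv
    have ha := Int.emod_nonneg a (ne_of_gt h0)
    have hb := Int.emod_nonneg b (ne_of_gt h0)
    have hm : a % (4*(k:ℤ)+2) = b % (4*(k:ℤ)+2) := by omega
    exact Int.ModEq.dvd (Int.ModEq.symm hm)
  · intro h
    have hm : a % (4*(k:ℤ)+2) = b % (4*(k:ℤ)+2) :=
      Int.ModEq.symm (Int.modEq_iff_dvd.mpr h)
    apply Fin.ext
    simp only [pidx, hm]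

lemma pidx_congr {k : ℕ} {a b : ℤ} (h : (4*(k:ℤ)+2) ∣ (a - b)) :
    pidx k a = pidx k b := pidx_eq_iff.mpr h

lemma pidx_ne_of {k : ℕ} {a b : ℤ} (h1 : a ≠ b) (h2 : (a-b).natAbs < 4*k+2) :
    pidx k a ≠ pidx k b := by
  intro h
  rw [pidx_eq_iff] at h
  have h3 := Int.eq_zero_of_dvd_of_natAbs_lt_natAbs h (by omega)
  omega

lemma flipBit_apply_ne {ι : Type} [Fintype ι] [DecidableEq ι]
    (x : ι → Bool) (i c : ι) (h : c ≠ i) : flipBit x i c = x c :=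
  Function.update_of_ne h _ _

lemma mem_pair_of_flip_ne {ι : Type} [Fintype ι] [DecidableEq ι]
    {x : ι → Bool} {i i' c : ι} (h : flipBit x i c ≠ flipBit x i' c) :
    c = i ∨ c = i' := by
  by_contra h'
  push_neg at h'
  exact h (by rw [flipBit_apply_ne x i c h'.1, flipBit_apply_ne x i' c h'.2])

/-- If two distinct patterns (offset `d ∈ [1,k]` apart) are both reachable by a
single flip from `x`, we get a contradiction. -/
lemma three_conflicts (k : ℕ) (x : Fin (4*k+2) → Bool) (i i' : Fin (4*k+2))
    (j j' d : ℤ) (hd1 : 1 ≤ d) (hdk : d ≤ (k:ℤ))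
    (hd : (2*(k:ℤ)+1) ∣ (j - j' - d))
    (h1 : SatPat k j (flipBit x i)) (h2 : SatPat k j' (flipBit x i')) : False := by
  obtain ⟨m, hm⟩ := hd
  have hc1 : pidx k (2*j) = pidx k (2*j'+2*d) :=
    pidx_congr ⟨m, by linear_combination 2*hm⟩
  have hc2 : pidx k (2*j-2*d) = pidx k (2*j') :=
    pidx_congr ⟨m, by linear_combination 2*hm⟩
  have hc3 : pidx k (2*j-2*d-1) = pidx k (2*j'-1) :=
    pidx_congr ⟨m, by linear_combination 2*hm⟩
  have A1 : flipBit x i (pidx k (2*j'+2*d)) = true := hc1 ▸ h1.2.1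
  have B1 : flipBit x i' (pidx k (2*j'+2*d)) = false := (h2.2.2 d hd1 hdk).1
  have A2 : flipBit x i' (pidx k (2*j')) = true := h2.2.1
  have B2 : flipBit x i (pidx k (2*j')) = false := hc2 ▸ (h1.2.2 d hd1 hdk).2.2
  have A3 : flipBit x i' (pidx k (2*j'-1)) = true := h2.1
  have B3 : flipBit x i (pidx k (2*j'-1)) = false := hc3 ▸ (h1.2.2 d hd1 hdk).2.1
  have e1 : pidx k (2*j'+2*d) = i ∨ pidx k (2*j'+2*d) = i' :=
    mem_pair_of_flip_ne (by rw [A1, B1]; simp)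
  have e2 : pidx k (2*j') = i ∨ pidx k (2*j') = i' :=
    mem_pair_of_flip_ne (by rw [B2, A2]; simp)
  have e3 : pidx k (2*j'-1) = i ∨ pidx k (2*j'-1) = i' :=
    mem_pair_of_flip_ne (by rw [B3, A3]; simp)
  have n12 : pidx k (2*j'+2*d) ≠ pidx k (2*j') := pidx_ne_of (by omega) (by omega)
  have n13 : pidx k (2*j'+2*d) ≠ pidx k (2*j'-1) := pidx_ne_of (by omega) (by omega)
  have n23 : pidx k (2*j') ≠ pidx k (2*j'-1) := pidx_ne_of (by omega) (by omega)
  rcases e1 with p1 | p1 <;> rcases e2 with p2 | p2 <;> rcases e3 with p3 | p3 <;>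
    first
      | exact n12 (p1.trans p2.symm)
      | exact n13 (p1.trans p3.symm)
      | exact n23 (p2.trans p3.symm)

lemma coord_of_two_flips {k : ℕ} {x : Fin (4*k+2) → Bool} {i i' : Fin (4*k+2)}
    (hii : i ≠ i') (a b : ℤ) (hab : pidx k a = pidx k b) (v : Bool)
    (h1 : flipBit x i (pidx k a) = v) (h2 : flipBit x i' (pidx k b) = v) :
    x (pidx k a) = v := by
  by_cases hc : pidx k a = i
  · have hne : pidx k b ≠ i' := by rw [← hab, hc]; exact hii
    rw [← h2, hab, flipBit_apply_ne x i' _ hne]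
  · rw [← h1, flipBit_apply_ne x i _ hc]

/-- Same pattern reachable by two single flips from an `x` not satisfying it:
the flips coincide. -/
lemma same_pattern_case (k : ℕ) (x : Fin (4*k+2) → Bool) (i i' : Fin (4*k+2))
    (j j' : ℤ) (hd : (2*(k:ℤ)+1) ∣ (j - j')) (hx : ¬ SatPat k j x)
    (h1 : SatPat k j (flipBit x i)) (h2 : SatPat k j' (flipBit x i')) : i = i' := by
  by_contra hii
  obtain ⟨m, hm⟩ := hd
  apply hx
  refine ⟨?_, ?_, fun t ht1 ht2 => ⟨?_, ?_, ?_⟩⟩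
  · exact coord_of_two_flips hii (2*j-1) (2*j'-1)
      (pidx_congr ⟨m, by linear_combination 2*hm⟩) true h1.1 h2.1
  · exact coord_of_two_flips hii (2*j) (2*j')
      (pidx_congr ⟨m, by linear_combination 2*hm⟩) true h1.2.1 h2.2.1
  · exact coord_of_two_flips hii (2*j+2*t) (2*j'+2*t)
      (pidx_congr ⟨m, by linear_combination 2*hm⟩) false
      (h1.2.2 t ht1 ht2).1 (h2.2.2 t ht1 ht2).1
  · exact coord_of_two_flips hii (2*j-2*t-1) (2*j'-2*t-1)
      (pidx_congr ⟨m, by linear_combination 2*hm⟩) false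
      (h1.2.2 t ht1 ht2).2.1 (h2.2.2 t ht1 ht2).2.1
  · exact coord_of_two_flips hii (2*j-2*t) (2*j'-2*t)
      (pidx_congr ⟨m, by linear_combination 2*hm⟩) false
      (h1.2.2 t ht1 ht2).2.2 (h2.2.2 t ht1 ht2).2.2

lemma flip_unique (k : ℕ) (x : Fin (4*k+2) → Bool) (i i' : Fin (4*k+2))
    (j j' : ℤ) (hx : ¬ SatPat k j x)
    (h1 : SatPat k j (flipBit x i)) (h2 : SatPat k j' (flipBit x i')) : i = i' := by
  set d := (j - j') % (2*(k:ℤ)+1) with hdef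
  have hk0 : (0:ℤ) < 2*(k:ℤ)+1 := by positivity
  have hd0 : 0 ≤ d := Int.emod_nonneg _ (ne_of_gt hk0)
  have hdlt : d < 2*(k:ℤ)+1 := Int.emod_lt_of_pos _ hk0
  have hdvd : (2*(k:ℤ)+1) ∣ (j - j' - d) := Int.dvd_self_sub_of_emod_eq rfl
  rcases lt_trichotomy d 0 with h | h | h
  · omega
  · exact same_pattern_case k x i i' j j' (by rw [h] at hdvd; simpa using hdvd) hx h1 h2
  · by_cases hle : d ≤ (k:ℤ)
    · exact absurd (three_conflicts k x i i' j j' d h hle hdvd h1 h2) not_false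
    · have : (2*(k:ℤ)+1) ∣ (j' - j - (2*(k:ℤ)+1-d)) := by
        obtain ⟨m, hm⟩ := hdvd
        exact ⟨-m-1, by linear_combination -hm⟩
      exact (three_conflicts k x i' i j' j (2*(k:ℤ)+1-d) (by omega) (by omega)
        this h2 h1).elim

end Aux

/-- For `k ≥ 1`, the pattern function `g` on `{0,1}^{4k+2}` (with `g x = 1` iff `x`
satisfies some pattern `P_j`, `j ∈ [2k+1]`) has 0-sensitivity `s₀(g) = 1`. -/
theorem sens0_pattern_function (k : ℕ) (hk : 1 ≤ k)
    (g : (Fin (4*k+2) → Bool) → Bool)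
    (hg : ∀ x, g x = true ↔ ∃ j : ℤ, 1 ≤ j ∧ j ≤ 2*(k:ℤ)+1 ∧ SatPat k j x) :
    sens0 g = 1 := by
  have hk6 : 6 ≤ 4*k+2 := by omega
  -- the all-but-one-zero witness
  set y : Fin (4*k+2) → Bool := fun c => decide (c = pidx k 1) with hy
  have hy1 : y (pidx k 1) = true := by simp [hy]
  have hyne : ∀ c, c ≠ pidx k 1 → y c = false := by
    intro c hc; simp [hy, hc]
  have hgy : g y = false := by
    by_contra h
    have h' : g y = true := by
      revert h; cases g y <;> simp
    obtain ⟨j, _, _, hsat⟩ := (hg y).mp h'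
    have hne : pidx k (2*j-1) ≠ pidx k (2*j) := pidx_ne_of (by omega) (by omega)
    have e1 : pidx k (2*j-1) = pidx k 1 := by
      by_contra hc
      have h1 := hsat.1; rw [hyne _ hc] at h1; exact absurd h1 (by simp)
    have e2 : pidx k (2*j) = pidx k 1 := by
      by_contra hc
      have h1 := hsat.2.1; rw [hyne _ hc] at h1; exact absurd h1 (by simp)
    exact hne (e1.trans e2.symm)
  have h21 : pidx k 2 ≠ pidx k 1 := pidx_ne_of (by omega) (by omega)
  have hz : g (flipBit y (pidx k 2)) = true := by
    apply (hg _).mpr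
    refine ⟨1, le_refl _, by omega, ?_, ?_, fun t ht1 ht2 => ⟨?_, ?_, ?_⟩⟩
    · have hne : pidx k (2*1-1) ≠ pidx k 2 := pidx_ne_of (by omega) (by omega)
      rw [flipBit_apply_ne _ _ _ hne]
      have : pidx k (2*1-1) = pidx k 1 := by norm_num
      rw [this, hy1]
    · have : pidx k (2*1) = pidx k 2 := by norm_num
      rw [this]
      simp [flipBit, Function.update_self, hyne _ h21]
    · have hne : pidx k (2*1+2*t) ≠ pidx k 2 := pidx_ne_of (by omega) (by omega)
      rw [flipBit_apply_ne _ _ _ hne]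
      exact hyne _ (pidx_ne_of (by omega) (by omega))
    · have hne : pidx k (2*1-2*t-1) ≠ pidx k 2 := pidx_ne_of (by omega) (by omega)
      rw [flipBit_apply_ne _ _ _ hne]
      exact hyne _ (pidx_ne_of (by omega) (by omega))
    · have hne : pidx k (2*1-2*t) ≠ pidx k 2 := pidx_ne_of (by omega) (by omega)
      rw [flipBit_apply_ne _ _ _ hne]
      exact hyne _ (pidx_ne_of (by omega) (by omega))
  apply le_antisymm
  · -- upper bound
    apply Finset.sup_le
    intro x hx
    rw [Finset.mem_filter] at hx
    have hxf : g x = false := hx.2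
    unfold sensAt
    rw [Finset.card_le_one]
    intro a ha b hb
    rw [Finset.mem_filter] at ha hb
    have hga : g (flipBit x a) = true := by
      have := ha.2; rw [hxf] at this
      revert this; cases g (flipBit x a) <;> simp
    have hgb : g (flipBit x b) = true := by
      have := hb.2; rw [hxf] at this
      revert this; cases g (flipBit x b) <;> simp
    obtain ⟨j, hj1, hj2, hsj⟩ := (hg _).mp hga
    obtain ⟨j', _, _, hsj'⟩ := (hg _).mp hgb
    have hnx : ¬ SatPat k j x := by
      intro hc
      have : g x = true := (hg x).mpr ⟨j, hj1, hj2, hc⟩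
      rw [hxf] at this; exact absurd this (by simp)
    exact flip_unique k x a b j j' hnx hsj hsj'
  · -- lower bound
    have hmem : y ∈ Finset.univ.filter fun x => g x = false := by
      simp [hgy]
    refine le_trans ?_ (Finset.le_sup hmem)
    unfold sensAt
    rw [Nat.one_le_iff_ne_zero, ← Nat.pos_iff_ne_zero, Finset.card_pos]
    refine ⟨pidx k 2, ?_⟩
    rw [Finset.mem_filter]
    exact ⟨Finset.mem_univ _, by rw [hz, hgy]; simp⟩
end

section
/- For every natural number k ≥ 1, let n = 4k+2 and let g : {0,1}^n → {0,1} be the pattern function: g(x) = 1 iff there exists j ∈ [2k+1] such that x satisfies pattern P_j, where P_j requires x_{2j-1} = x_{2j} = 1 and, for all i ∈ [k], x_{2j+2i} = 0 and x_{2j-2i-1} = x_{2j-2i} = 0 (all indices taken modulo n). Then the 0-block-sensitivity of g equals 2k+1, i.e., bs_0(g) = n/2 = 2k+1. -/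
lemma not_dvd_of_aux {N d : ℤ} (h0 : -N < d) (h1 : d < N) (h2 : d ≠ 0) : ¬ N ∣ d := by
  intro hd
  have h3 : N ∣ |d| := (dvd_abs _ _).mpr hd
  have h4 := Int.le_of_dvd (abs_pos.mpr h2) h3
  have h5 : |d| < N := abs_lt.mpr ⟨h0, h1⟩
  omega

lemma pidx_ne_aux (k : ℕ) (s t : ℤ) (h0 : -(4*(k:ℤ)+2) < s - t) (h1 : s - t < 4*(k:ℤ)+2)
    (h2 : s - t ≠ 0) : pidx k s ≠ pidx k t := by
  intro he
  have hval := congrArg Fin.val he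
  simp only [pidx] at hval
  have hN : (0:ℤ) < 4*(k:ℤ)+2 := by positivity
  have hs := Int.emod_nonneg s (ne_of_gt hN)
  have ht := Int.emod_nonneg t (ne_of_gt hN)
  have hmod : s % (4*(k:ℤ)+2) = t % (4*(k:ℤ)+2) := by omega
  have hdvd : (4*(k:ℤ)+2) ∣ t - s := Int.ModEq.dvd hmod
  have hdvd' : (4*(k:ℤ)+2) ∣ s - t := by
    have := hdvd.neg_right
    simpa using this
  exact not_dvd_of_aux h0 h1 h2 hdvd'

lemma flip_agree_aux {ι : Type} [Fintype ι] [DecidableEq ι] (x : ι → Bool)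
    {B1 B2 : Finset ι} (hd : Disjoint B1 B2) (c : ι) (v : Bool)
    (h1 : flipBlock x B1 c = v) (h2 : flipBlock x B2 c = v) : x c = v := by
  unfold flipBlock at h1 h2
  by_cases hc : c ∈ B1
  · have hc2 : c ∉ B2 := Finset.disjoint_left.mp hd hc
    simpa [hc2] using h2
  · simpa [hc] using h1

lemma sat_agree_aux (k : ℕ) (j : ℤ) (x : Fin (4*k+2) → Bool)
    {B1 B2 : Finset (Fin (4*k+2))} (hd : Disjoint B1 B2)
    (h1 : SatPat k j (flipBlock x B1)) (h2 : SatPat k j (flipBlock x B2)) :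
    SatPat k j x := by
  obtain ⟨a1, b1, c1⟩ := h1
  obtain ⟨a2, b2, c2⟩ := h2
  refine ⟨flip_agree_aux x hd _ _ a1 a2, flip_agree_aux x hd _ _ b1 b2, fun i hi hi' => ?_⟩
  obtain ⟨p1, q1, r1⟩ := c1 i hi hi'
  obtain ⟨p2, q2, r2⟩ := c2 i hi hi'
  exact ⟨flip_agree_aux x hd _ _ p1 p2, flip_agree_aux x hd _ _ q1 q2,
    flip_agree_aux x hd _ _ r1 r2⟩

lemma blocks_bound_aux (k : ℕ) (g : (Fin (4*k+2) → Bool) → Bool)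
    (hg : ∀ x, g x = true ↔ ∃ j : ℤ, 1 ≤ j ∧ j ≤ 2*(k:ℤ)+1 ∧ SatPat k j x)
    (x : Fin (4*k+2) → Bool) (hx : g x = false)
    (b : ℕ) (Bl : Fin b → Finset (Fin (4*k+2)))
    (hdisj : Pairwise fun p q => Disjoint (Bl p) (Bl q))
    (hflip : ∀ p, g (flipBlock x (Bl p)) ≠ g x) : b ≤ 2*k+1 := by
  have hspec : ∀ p : Fin b, ∃ j : ℤ, 1 ≤ j ∧ j ≤ 2*(k:ℤ)+1 ∧
      SatPat k j (flipBlock x (Bl p)) := by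
    intro p
    have h := hflip p
    rw [hx] at h
    have ht : g (flipBlock x (Bl p)) = true := by
      cases hcase : g (flipBlock x (Bl p)) with
      | false => exact absurd hcase h
      | true => rfl
    exact (hg _).mp ht
  set F : Fin b → ℤ := fun p => (hspec p).choose with hF
  have hmem : ∀ p, F p ∈ Finset.Icc (1:ℤ) (2*(k:ℤ)+1) := fun p =>
    Finset.mem_Icc.mpr ⟨(hspec p).choose_spec.1, (hspec p).choose_spec.2.1⟩
  have hinj : Set.InjOn F (Finset.univ : Finset (Fin b)) := by
    intro p _ q _ hpq
    by_contra hne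
    have hd : Disjoint (Bl p) (Bl q) := hdisj hne
    have hs1 : SatPat k (F p) (flipBlock x (Bl p)) := (hspec p).choose_spec.2.2
    have hs2 : SatPat k (F q) (flipBlock x (Bl q)) := (hspec q).choose_spec.2.2
    rw [hpq] at hs1
    have hsat : SatPat k (F q) x := sat_agree_aux k (F q) x hd hs1 hs2
    have hgt : g x = true :=
      (hg x).mpr ⟨F q, (hspec q).choose_spec.1, (hspec q).choose_spec.2.1, hsat⟩
    rw [hx] at hgt
    exact absurd hgt (by simp)
  calc b = (Finset.univ : Finset (Fin b)).card := by simp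
    _ ≤ (Finset.Icc (1:ℤ) (2*(k:ℤ)+1)).card :=
        Finset.card_le_card_of_injOn F (fun p _ => hmem p) hinj
    _ = 2*k+1 := by
        rw [Int.card_Icc]
        omega

/-- For `k ≥ 1`, the pattern function `g` on `{0,1}^{4k+2}` (with `g x = 1` iff `x`
satisfies some pattern `P_j`, `j ∈ [2k+1]`) has 0-block-sensitivity `bs₀(g) = 2k+1`. -/
theorem bs0_pattern_function (k : ℕ) (hk : 1 ≤ k)
    (g : (Fin (4*k+2) → Bool) → Bool)
    (hg : ∀ x, g x = true ↔ ∃ j : ℤ, 1 ≤ j ∧ j ≤ 2*(k:ℤ)+1 ∧ SatPat k j x) :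
    bs0 g = 2*k+1 := by
  apply le_antisymm
  · -- upper bound
    apply Finset.sup_le
    intro x hx
    rw [Finset.mem_filter] at hx
    apply csSup_le
    · exact ⟨0, Fin.elim0, fun p => p.elim0, fun p => p.elim0⟩
    · rintro b ⟨Bl, hdisj, hflip⟩
      exact blocks_bound_aux k g hg x hx.2 b Bl hdisj hflip
  · -- lower bound
    have hx0 : g (fun _ => false) = false := by
      cases h : g (fun _ => false) with
      | false => rfl
      | true =>
        obtain ⟨j, _, _, hs⟩ := (hg _).mp h
        exact absurd hs.1 (by simp)
    have hmem : (fun _ => false) ∈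
        Finset.univ.filter (fun x : Fin (4*k+2) → Bool => g x = false) :=
      Finset.mem_filter.mpr ⟨Finset.mem_univ _, hx0⟩
    refine le_trans ?_ (Finset.le_sup hmem)
    apply le_csSup
    · refine ⟨2*k+1, ?_⟩
      rintro b ⟨Bl, hdisj, hflip⟩
      exact blocks_bound_aux k g hg _ hx0 b Bl hdisj hflip
    · -- 2k+1 disjoint sensitive blocks at the all-zero input
      refine ⟨fun p => {pidx k (2*(p:ℤ)+1), pidx k (2*(p:ℤ)+2)}, ?_, ?_⟩
      · -- pairwise disjoint
        intro p q hne
        have hvne : (p:ℤ) ≠ (q:ℤ) := by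
          intro h
          exact hne (Fin.ext (by exact_mod_cast h))
        have hp : (p:ℤ) < 2*(k:ℤ)+1 := by exact_mod_cast p.isLt
        have hq : (q:ℤ) < 2*(k:ℤ)+1 := by exact_mod_cast q.isLt
        have hp0 : (0:ℤ) ≤ (p:ℤ) := by positivity
        have hq0 : (0:ℤ) ≤ (q:ℤ) := by positivity
        rw [Finset.disjoint_left]
        intro a ha hb
        simp only [Finset.mem_insert, Finset.mem_singleton] at ha hb
        rcases ha with ha | ha <;> rcases hb with hb | hb <;> subst ha <;>
          exact absurd hb (pidx_ne_aux k _ _ (by omega) (by omega) (by omega))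
      · -- each block flips the value
        intro p
        rw [hx0]
        have hp : (p:ℤ) < 2*(k:ℤ)+1 := by exact_mod_cast p.isLt
        have hp0 : (0:ℤ) ≤ (p:ℤ) := by positivity
        have hy : ∀ c, flipBlock (fun _ => false)
            ({pidx k (2*(p:ℤ)+1), pidx k (2*(p:ℤ)+2)} : Finset (Fin (4*k+2))) c
            = (if c = pidx k (2*(p:ℤ)+1) ∨ c = pidx k (2*(p:ℤ)+2) then true else false) := by
          intro c
          simp [flipBlock, Finset.mem_insert, Finset.mem_singleton]
        have hgt : g (flipBlock (fun _ => false)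
            ({pidx k (2*(p:ℤ)+1), pidx k (2*(p:ℤ)+2)} : Finset (Fin (4*k+2)))) = true := by
          apply (hg _).mpr
          refine ⟨(p:ℤ)+1, by omega, by omega, ?_, ?_, ?_⟩
          · rw [hy]
            have he : 2*((p:ℤ)+1)-1 = 2*(p:ℤ)+1 := by ring
            rw [he]
            simp
          · rw [hy]
            have he : 2*((p:ℤ)+1) = 2*(p:ℤ)+2 := by ring
            rw [he]
            simp
          · intro i hi1 hi2
            refine ⟨?_, ?_, ?_⟩ <;> rw [hy] <;>
              rw [if_neg (by
                push_neg
                constructor <;>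
                  exact pidx_ne_aux k _ _ (by omega) (by omega) (by omega))]
        rw [hgt]
        simp
end

section
/- For every natural number k ≥ 1, there exists a Boolean function f (on (4k+2)(3k+2) variables) such that bs(f) = (2/3)·s(f)² − (1/3)·s(f), where s(f) = 3k+2. In particular, there exist Boolean functions of arbitrarily large sensitivity whose block sensitivity equals (2/3)s(f)² − (1/3)s(f). -/
namespace TwoThirds

open Finset

/-! ### Generic flip lemmas -/

section FlipLemmas

variable {ι : Type} [Fintype ι] [DecidableEq ι]

lemma flipBit_ne (x : ι → Bool) {a v : ι} (h : v ≠ a) : flipBit x a v = x v :=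
  Function.update_of_ne h _ _

lemma flipBit_self (x : ι → Bool) (a : ι) : flipBit x a a = !x a :=
  Function.update_self _ _ _

end FlipLemmas

/-! ### The basic pattern function -/

variable (k : ℕ)

abbrev Pos (k : ℕ) := Fin (2*k+1) × Bool
abbrev Var (k : ℕ) := Pos k × Fin (3*k+2)

def inO (i j : Fin (2*k+1)) : Prop := 1 ≤ (j - i).val ∧ (j - i).val ≤ k

instance (i j : Fin (2*k+1)) : Decidable (inO k i j) := by unfold inO; infer_instance

lemma inO_irrefl (i : Fin (2*k+1)) : ¬ inO k i i := by
  simp [inO]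

lemma inO_antisymm {i j : Fin (2*k+1)} (h1 : inO k i j) (h2 : inO k j i) : False := by
  have e : (j - i) + (i - j) = 0 := by rw [sub_add_sub_cancel, sub_self]
  have e2 := congrArg Fin.val e
  rw [Fin.add_def] at e2
  simp only [Fin.val_zero] at e2
  obtain ⟨h1a, h1b⟩ := h1
  obtain ⟨h2a, h2b⟩ := h2
  have hlt : ((j - i).val + (i - j).val) < 2*k+1 := by omega
  rw [Nat.mod_eq_of_lt hlt] at e2
  omega

def gOne (x : Pos k → Bool) (i : Fin (2*k+1)) : Prop :=
  x (i, true) = true ∧ x (i, false) = true ∧ (∀ j, j ≠ i → x (j, true) = false) ∧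
  (∀ j, x (j, false) = true → j = i ∨ inO k i j)

instance (x : Pos k → Bool) (i) : Decidable (gOne k x i) := by unfold gOne; infer_instance

/-- The big function: OR over `3k+2` copies of the pattern function. -/
def F (x : Var k → Bool) : Bool := decide (∃ c i, gOne k (fun a => x (a, c)) i)

def copy (x : Var k → Bool) (c : Fin (3*k+2)) : Pos k → Bool := fun a => x (a, c)

lemma F_eq_true {x : Var k → Bool} : F k x = true ↔ ∃ c i, gOne k (copy k x c) i := by
  unfold F copy; exact decide_eq_true_iff

lemma F_eq_false {x : Var k → Bool} : F k x = false ↔ ∀ c i, ¬ gOne k (copy k x c) i := by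
  unfold F copy
  rw [decide_eq_false_iff_not]
  push_neg
  exact Iff.rfl

lemma gOne_of_between {x y y' : Pos k → Bool} (h : ∀ v, x v = y v ∨ x v = y' v) {i}
    (hy : gOne k y i) (hy' : gOne k y' i) : gOne k x i := by
  obtain ⟨h1, h2, h3, h4⟩ := hy
  obtain ⟨h1', h2', h3', h4'⟩ := hy'
  refine ⟨?_, ?_, ?_, ?_⟩
  · rcases h (i, true) with hh | hh <;> rw [hh] <;> assumption
  · rcases h (i, false) with hh | hh <;> rw [hh] <;> assumption
  · intro j hj
    rcases h (j, true) with hh | hh <;> rw [hh]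
    · exact h3 j hj
    · exact h3' j hj
  · intro j hjx
    rcases h (j, false) with hh | hh
    · rw [hh] at hjx; exact h4 j hjx
    · rw [hh] at hjx; exact h4' j hjx

lemma flip_unique {x : Pos k → Bool} (hx : ∀ i, ¬ gOne k x i) {a a' : Pos k} {i i' : Fin (2*k+1)}
    (hy : gOne k (flipBit x a) i) (hy' : gOne k (flipBit x a') i') : a = a' := by
  by_contra hne
  set y := flipBit x a with hydef
  set y' := flipBit x a' with hy'def
  have hxy : ∀ v, v ≠ a → x v = y v := fun v hv => (flipBit_ne x hv).symm
  have hxy' : ∀ v, v ≠ a' → x v = y' v := fun v hv => (flipBit_ne x hv).symm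
  by_cases hii : i = i'
  · subst hii
    have hbetween : ∀ v, x v = y v ∨ x v = y' v := by
      intro v
      by_cases hv : v = a
      · exact Or.inr (hxy' v (hv ▸ hne))
      · exact Or.inl (hxy v hv)
    exact hx i (gOne_of_between k hbetween hy hy')
  · have mem1 : a = (i, true) ∨ a' = (i, true) := by
      by_contra hc
      push_neg at hc
      have e1 : x (i, true) = y (i, true) := hxy _ (Ne.symm hc.1)
      have e2 : x (i, true) = y' (i, true) := hxy' _ (Ne.symm hc.2)
      rw [hy.1] at e1
      rw [hy'.2.2.1 i hii] at e2
      rw [e1] at e2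
      simp at e2
    have mem2 : a = (i', true) ∨ a' = (i', true) := by
      by_contra hc
      push_neg at hc
      have e1 : x (i', true) = y (i', true) := hxy _ (Ne.symm hc.1)
      have e2 : x (i', true) = y' (i', true) := hxy' _ (Ne.symm hc.2)
      rw [hy'.1] at e2
      rw [hy.2.2.1 i' (Ne.symm hii)] at e1
      rw [e1] at e2
      simp at e2
    have ha2 : a.2 = true ∧ a'.2 = true := by
      rcases mem1 with h | h <;> rcases mem2 with h2 | h2
      · exact absurd (congrArg Prod.fst (h.symm.trans h2)) hii
      · exact ⟨by rw [h], by rw [h2]⟩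
      · exact ⟨by rw [h2], by rw [h]⟩
      · exact absurd (congrArg Prod.fst (h.symm.trans h2)) hii
    have hfa : ∀ j : Fin (2*k+1), (j, false) ≠ a := by
      intro j e
      rw [← e] at ha2
      simp at ha2
    have hfa' : ∀ j : Fin (2*k+1), (j, false) ≠ a' := by
      intro j e
      rw [← e] at ha2
      simp at ha2
    have hO1 : inO k i' i := by
      have hv : y' (i, false) = true := by
        rw [← hxy' _ (hfa' i), hxy _ (hfa i), hy.2.1]
      rcases hy'.2.2.2 i hv with h | h
      · exact absurd h hii
      · exact h
    have hO2 : inO k i i' := by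
      have hv : y (i', false) = true := by
        rw [← hxy _ (hfa i'), hxy' _ (hfa' i'), hy'.2.1]
      rcases hy.2.2.2 i' hv with h | h
      · exact absurd h.symm hii
      · exact h
    exact inO_antisymm k hO2 hO1


/-! ### Copy lemmas -/

lemma copy_flipBit_ne (x : Var k → Bool) {v : Var k} {c : Fin (3*k+2)} (h : v.2 ≠ c) :
    copy k (flipBit x v) c = copy k x c := by
  funext a
  exact flipBit_ne x (fun e => h (by rw [← e]))

lemma copy_flipBit_eq (x : Var k → Bool) (b : Pos k) (c : Fin (3*k+2)) :
    copy k (flipBit x (b, c)) c = flipBit (copy k x c) b := by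
  funext a
  by_cases h : a = b
  · subst h
    show flipBit x (a, c) (a, c) = _
    rw [flipBit_self, flipBit_self]
    rfl
  · show flipBit x (b, c) (a, c) = _
    rw [flipBit_ne x (fun e => h (congrArg Prod.fst e)),
      flipBit_ne (copy k x c) h]
    rfl

lemma copy_flipBlock (x : Var k → Bool) (B : Finset (Var k)) (c : Fin (3*k+2)) :
    copy k (flipBlock x B) c
      = flipBlock (copy k x c) (B.preimage (fun a : Pos k => (a, c))
          (fun a _ b _ h => congrArg Prod.fst h)) := by
  funext a
  simp [copy, flipBlock, Finset.mem_preimage]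
  exact if_congr (Finset.mem_preimage (f := fun a : Pos k => (a, c)) (s := B) (x := a)).symm rfl rfl

/-! ### The z pattern -/

def zPat (i : Fin (2*k+1)) : Pos k → Bool := fun a => decide (a.1 = i)

lemma gOne_zPat (i : Fin (2*k+1)) : gOne k (zPat k i) i := by
  refine ⟨by simp [zPat], by simp [zPat], ?_, ?_⟩
  · intro j hj; simp [zPat, hj]
  · intro j hj; left; simpa [zPat] using hj

lemma zPat_flip {b : Pos k} (hb : ¬ (b.2 = false ∧ inO k 0 b.1)) (i : Fin (2*k+1)) :
    ¬ gOne k (flipBit (zPat k 0) b) i := by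
  obtain ⟨j, β⟩ := b
  intro hg
  cases β
  · -- β = false, so ¬ inO k 0 j
    simp only [and_true] at hb  -- hb : ¬ (false = false ∧ inO k 0 j)
    have hb' : ¬ inO k 0 j := by simpa using hb
    have hi0 : i = 0 := by
      have h1 := hg.1
      rw [flipBit_ne _ (by simp)] at h1
      simpa [zPat] using h1
    subst hi0
    by_cases hj : j = 0
    · subst hj
      have h2 := hg.2.1
      rw [flipBit_self] at h2
      simp [zPat] at h2
    · have h4 : flipBit (zPat k 0) (j, false) (j, false) = true := by
        rw [flipBit_self]
        simp [zPat, hj]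
      rcases hg.2.2.2 j h4 with h | h
      · exact hj h
      · exact hb' h
  · -- β = true
    by_cases hj : j = 0
    · subst hj
      have h1 := hg.1
      by_cases hi : i = 0
      · subst hi
        rw [flipBit_self] at h1
        simp [zPat] at h1
      · rw [flipBit_ne _ (by simp [hi])] at h1
        simp [zPat, hi] at h1
    · by_cases hi : i = j
      · subst hi
        have h3 := hg.2.2.1 0 (Ne.symm hj)
        rw [flipBit_ne _ (by simp [Ne.symm hj])] at h3
        simp [zPat] at h3
      · have h3 := hg.2.2.1 j (fun e => hi e.symm)
        rw [flipBit_self] at h3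
        simp [zPat, hj] at h3

lemma gOne_flip_inO {x : Pos k → Bool} {i j : Fin (2*k+1)} (hg : gOne k x i) (hj : inO k i j) :
    gOne k (flipBit x (j, false)) i := by
  have hji : j ≠ i := fun e => inO_irrefl k i (e ▸ hj)
  refine ⟨?_, ?_, ?_, ?_⟩
  · rw [flipBit_ne x (by simp)]; exact hg.1
  · rw [flipBit_ne x (fun e => hji (congrArg Prod.fst e).symm)]; exact hg.2.1
  · intro j' hj'
    rw [flipBit_ne x (by simp)]
    exact hg.2.2.1 j' hj'
  · intro j' h'
    by_cases e : j' = j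
    · right; exact e ▸ hj
    · rw [flipBit_ne x (fun eq => e (congrArg Prod.fst eq))] at h'
      exact hg.2.2.2 j' h'


/-! ### Counting -/

lemma card_inO (i : Fin (2*k+1)) :
    (Finset.univ.filter fun j => inO k i j).card = k := by
  have h1 : (Finset.univ.filter fun j => inO k i j).card
      = (Finset.univ.filter fun d : Fin (2*k+1) => 1 ≤ d.val ∧ d.val ≤ k).card := by
    apply Finset.card_equiv (Equiv.subRight i)
    intro j
    simp only [Finset.mem_filter, Finset.mem_univ, true_and, Equiv.subRight_apply]
    exact Iff.rfl
  rw [h1]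
  rw [Finset.card_bij' (fun (d : Fin (2*k+1)) _ => d.val)
    (fun (m : ℕ) (hm : m ∈ Finset.Icc 1 k) => (⟨m, by
      have := Finset.mem_Icc.mp hm; omega⟩ : Fin (2*k+1)))
    ?_ ?_ ?_ ?_]
  · rw [Nat.card_Icc]; omega
  · intro a ha
    simp only [Finset.mem_filter] at ha
    simp [Finset.mem_Icc]
    omega
  · intro m hm
    have := Finset.mem_Icc.mp hm
    simp [Finset.mem_filter]
    omega
  · intro a _; rfl
  · intro m _; rfl

def goodSet (i : Fin (2*k+1)) (c : Fin (3*k+2)) : Finset (Var k) :=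
  (Finset.univ.filter fun a : Pos k => ¬(a.2 = false ∧ inO k i a.1)) ×ˢ ({c} : Finset (Fin (3*k+2)))

lemma card_goodSet (i : Fin (2*k+1)) (c : Fin (3*k+2)) :
    (goodSet k i c).card = 3*k+2 := by
  unfold goodSet
  rw [Finset.card_product, Finset.card_singleton, mul_one]
  have hneg : (Finset.univ.filter fun a : Pos k => (a.2 = false ∧ inO k i a.1)).card = k := by
    have he : (Finset.univ.filter fun a : Pos k => (a.2 = false ∧ inO k i a.1))
        = (Finset.univ.filter fun j => inO k i j) ×ˢ ({false} : Finset Bool) := by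
      ext ⟨a1, a2⟩
      simp only [Finset.mem_filter, Finset.mem_univ, true_and, Finset.mem_product,
        Finset.mem_singleton]
      tauto
    rw [he, Finset.card_product, card_inO]
    simp
  have htot := Finset.card_filter_add_card_filter_not
    (s := (Finset.univ : Finset (Pos k))) (p := fun a : Pos k => (a.2 = false ∧ inO k i a.1))
  have hcard : (Finset.univ : Finset (Pos k)).card = (2*k+1)*2 := by
    rw [Finset.card_univ]
    simp [Fintype.card_prod]
  omega

/-! ### Sensitivity bounds -/

lemma sensAt_le (x : Var k → Bool) : sensAt (F k) x ≤ 3*k+2 := by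
  cases hFx : F k x
  · -- f x = false : at most one sensitive bit per copy
    have hall := (F_eq_false k).mp hFx
    have hinj : Set.InjOn (fun v : Var k => v.2)
        ↑(Finset.univ.filter fun v => F k (flipBit x v) ≠ F k x) := by
      intro v hv w hw hvw0
      have hvw : v.2 = w.2 := hvw0
      simp only [Finset.coe_filter, Set.mem_setOf_eq, hFx] at hv hw
      replace hv : F k (flipBit x v) = true := by
        cases h : F k (flipBit x v)
        · exact absurd h hv.2
        · rfl
      replace hw : F k (flipBit x w) = true := by
        cases h : F k (flipBit x w)
        · exact absurd h hw.2
        · rfl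
      obtain ⟨c₁, i₁, hg₁⟩ := (F_eq_true k).mp hv
      obtain ⟨c₂, i₂, hg₂⟩ := (F_eq_true k).mp hw
      have hc₁ : c₁ = v.2 := by
        by_contra hc
        rw [copy_flipBit_ne k x (fun e => hc e.symm)] at hg₁
        exact hall c₁ i₁ hg₁
      have hc₂ : c₂ = w.2 := by
        by_contra hc
        rw [copy_flipBit_ne k x (fun e => hc e.symm)] at hg₂
        exact hall c₂ i₂ hg₂
      subst hc₁; subst hc₂
      rw [show v = (v.1, v.2) from rfl, copy_flipBit_eq] at hg₁
      rw [show w = (w.1, w.2) from rfl, copy_flipBit_eq, ← hvw] at hg₂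
      have h1 := flip_unique k (hall v.2) hg₁ hg₂
      exact Prod.ext h1 hvw
    calc sensAt (F k) x ≤ (Finset.univ : Finset (Fin (3*k+2))).card :=
          Finset.card_le_card_of_injOn _ (fun _ _ => Finset.mem_univ _) hinj
      _ = 3*k+2 := by simp
  · -- f x = true
    obtain ⟨c, i, hg⟩ := (F_eq_true k).mp hFx
    have hsub : (Finset.univ.filter fun v => F k (flipBit x v) ≠ F k x) ⊆ goodSet k i c := by
      intro v hv
      simp only [Finset.mem_filter, hFx] at hv
      replace hv : F k (flipBit x v) = false := by
        cases h : F k (flipBit x v)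
        · rfl
        · exact absurd h hv.2
      have hall' := (F_eq_false k).mp hv
      have hvc : v.2 = c := by
        by_contra hc
        exact hall' c i (by rw [copy_flipBit_ne k x hc]; exact hg)
      unfold goodSet
      rw [Finset.mem_product]
      refine ⟨?_, by simp [hvc]⟩
      simp only [Finset.mem_filter, Finset.mem_univ, true_and]
      rintro ⟨hvf, hvO⟩
      apply hall' c i
      have hv1 : v = ((v.1.1, false), c) := by
        rw [← hvf, ← hvc]
      rw [hv1, copy_flipBit_eq]
      exact gOne_flip_inO k hg hvO
    calc sensAt (F k) x ≤ (goodSet k i c).card := Finset.card_le_card hsub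
      _ = 3*k+2 := card_goodSet k i c

lemma sens_le : sens (F k) ≤ 3*k+2 :=
  Finset.sup_le fun x _ => sensAt_le k x

def x₀ : Var k → Bool := fun v => decide (v.2 = 0 ∧ v.1.1 = 0)

lemma copy_x₀_zero : copy k (x₀ k) 0 = zPat k 0 := by
  funext a
  simp [copy, x₀, zPat]

lemma copy_x₀_ne {c : Fin (3*k+2)} (hc : c ≠ 0) : copy k (x₀ k) c = fun _ => false := by
  funext a
  simp [copy, x₀, hc]

lemma gOne_const_false (i : Fin (2*k+1)) : ¬ gOne k (fun _ => false) i := by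
  simp [gOne]

lemma F_x₀ : F k (x₀ k) = true :=
  (F_eq_true k).mpr ⟨0, 0, by rw [copy_x₀_zero]; exact gOne_zPat k 0⟩

lemma sens_ge : 3*k+2 ≤ sens (F k) := by
  have hsub : goodSet k 0 0 ⊆ (Finset.univ.filter fun v => F k (flipBit (x₀ k) v) ≠ F k (x₀ k)) := by
    intro v hv
    unfold goodSet at hv
    rw [Finset.mem_product] at hv
    obtain ⟨hv1, hv2⟩ := hv
    simp only [Finset.mem_filter, Finset.mem_univ, true_and] at hv1
    simp only [Finset.mem_singleton] at hv2
    simp only [Finset.mem_filter, Finset.mem_univ, true_and, F_x₀]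
    have hflip : F k (flipBit (x₀ k) v) = false := by
      rw [F_eq_false]
      intro c i
      by_cases hc : c = 0
      · subst hc
        have hveq : v = (v.1, (0 : Fin (3*k+2))) := by rw [← hv2]
        rw [hveq, copy_flipBit_eq, copy_x₀_zero]
        exact zPat_flip k hv1 i
      · rw [copy_flipBit_ne k _ (by rw [hv2]; exact Ne.symm hc), copy_x₀_ne k hc]
        exact gOne_const_false k i
    rw [hflip]
    simp
  have h1 : (goodSet k 0 0).card ≤ sensAt (F k) (x₀ k) := Finset.card_le_card hsub
  rw [card_goodSet] at h1
  exact le_trans h1 (Finset.le_sup (Finset.mem_univ _))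

theorem sens_F : sens (F k) = 3*k+2 := le_antisymm (sens_le k) (sens_ge k)


/-! ### Block sensitivity bounds -/

lemma bs_mem_le (x : Var k → Bool) {b : ℕ}
    (hb : b ∈ {b : ℕ | ∃ Bl : Fin b → Finset (Var k),
      (Pairwise fun p q => Disjoint (Bl p) (Bl q)) ∧
      ∀ p, F k (flipBlock x (Bl p)) ≠ F k x}) :
    b ≤ (3*k+2)*(2*k+1) := by
  obtain ⟨Bl, hdis, hne⟩ := hb
  cases hFx : F k x
  · -- f x = false
    have hall := (F_eq_false k).mp hFx
    have hwit : ∀ p : Fin b, ∃ ci : Fin (3*k+2) × Fin (2*k+1),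
        gOne k (copy k (flipBlock x (Bl p)) ci.1) ci.2 := by
      intro p
      have h1 := hne p
      rw [hFx] at h1
      have h2 : F k (flipBlock x (Bl p)) = true := by
        cases h : F k (flipBlock x (Bl p))
        · exact absurd h h1
        · rfl
      obtain ⟨c, i, hg⟩ := (F_eq_true k).mp h2
      exact ⟨(c, i), hg⟩
    choose φ hφ using hwit
    have hinj : Function.Injective φ := by
      intro p q heq
      by_contra hpq
      have hdisj := hdis hpq
      have hy := hφ p
      have hy' := hφ q
      rw [← heq] at hy'
      have hbet : ∀ a : Pos k, copy k x (φ p).1 a = copy k (flipBlock x (Bl p)) (φ p).1 a ∨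
          copy k x (φ p).1 a = copy k (flipBlock x (Bl q)) (φ p).1 a := by
        intro a
        by_cases hm : (a, (φ p).1) ∈ Bl p
        · right
          have hnm : (a, (φ p).1) ∉ Bl q := Finset.disjoint_left.mp hdisj hm
          simp [copy, flipBlock, hnm]
        · left
          simp [copy, flipBlock, hm]
      exact hall (φ p).1 (φ p).2 (gOne_of_between k hbet hy hy')
    have hcard := Fintype.card_le_of_injective φ hinj
    simpa using hcard
  · -- f x = true
    obtain ⟨c, i, hg⟩ := (F_eq_true k).mp hFx
    have hwit : ∀ p : Fin b, ∃ a : Pos k, (a, c) ∈ Bl p := by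
      intro p
      by_contra hcon
      push_neg at hcon
      apply hne p
      rw [hFx]
      apply (F_eq_true k).mpr
      refine ⟨c, i, ?_⟩
      have hcopy : copy k (flipBlock x (Bl p)) c = copy k x c := by
        funext a
        simp [copy, flipBlock, hcon a]
      rw [hcopy]
      exact hg
    choose φ hφ using hwit
    have hinj : Function.Injective φ := by
      intro p q hpq
      by_contra hne'
      exact Finset.disjoint_left.mp (hdis hne') (hφ p) (hpq ▸ hφ q)
    have hcard := Fintype.card_le_of_injective φ hinj
    simp [Fintype.card_prod] at hcard
    nlinarith [sq_nonneg k]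

lemma bs_zero_mem (x : Var k → Bool) :
    (0 : ℕ) ∈ {b : ℕ | ∃ Bl : Fin b → Finset (Var k),
      (Pairwise fun p q => Disjoint (Bl p) (Bl q)) ∧
      ∀ p, F k (flipBlock x (Bl p)) ≠ F k x} :=
  ⟨Fin.elim0, by intro p; exact p.elim0, fun p => p.elim0⟩

lemma bsAt_le (x : Var k → Bool) : bsAt (F k) x ≤ (3*k+2)*(2*k+1) := by
  unfold bsAt
  exact csSup_le ⟨0, bs_zero_mem k x⟩ (fun b hb => bs_mem_le k x hb)

lemma bs_le : bs (F k) ≤ (3*k+2)*(2*k+1) :=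
  Finset.sup_le fun x _ => bsAt_le k x

def x₁ : Var k → Bool := fun _ => false

lemma F_x₁ : F k (x₁ k) = false := by
  rw [F_eq_false]
  intro c i hg
  exact absurd hg.1 (by simp [copy, x₁])

def Blk (p : Fin ((3*k+2)*(2*k+1))) : Finset (Var k) :=
  {(((finProdFinEquiv.symm p).2, true), (finProdFinEquiv.symm p).1),
   (((finProdFinEquiv.symm p).2, false), (finProdFinEquiv.symm p).1)}

lemma mem_Blk {p : Fin ((3*k+2)*(2*k+1))} {v : Var k} (hv : v ∈ Blk k p) :
    v.1.1 = (finProdFinEquiv.symm p).2 ∧ v.2 = (finProdFinEquiv.symm p).1 := by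
  unfold Blk at hv
  rw [Finset.mem_insert, Finset.mem_singleton] at hv
  rcases hv with rfl | rfl <;> simp

lemma Blk_disjoint : Pairwise fun p q => Disjoint (Blk k p) (Blk k q) := by
  intro p q hpq
  rw [Finset.disjoint_left]
  intro v hv hv'
  have h1 := mem_Blk k hv
  have h2 := mem_Blk k hv'
  apply hpq
  apply finProdFinEquiv.symm.injective
  exact Prod.ext (h1.2 ▸ h2.2) (h1.1 ▸ h2.1)

lemma copy_flip_Blk (p : Fin ((3*k+2)*(2*k+1))) :
    copy k (flipBlock (x₁ k) (Blk k p)) (finProdFinEquiv.symm p).1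
      = zPat k (finProdFinEquiv.symm p).2 := by
  funext a
  obtain ⟨j, β⟩ := a
  show flipBlock (x₁ k) (Blk k p) ((j, β), (finProdFinEquiv.symm p).1)
    = zPat k (finProdFinEquiv.symm p).2 (j, β)
  by_cases hj : j = (finProdFinEquiv.symm p).2
  · have hm : ((j, β), (finProdFinEquiv.symm p).1) ∈ Blk k p := by
      rw [hj]
      unfold Blk
      cases β
      · exact Finset.mem_insert.mpr (Or.inr (Finset.mem_singleton.mpr rfl))
      · exact Finset.mem_insert_self _ _
    show (if ((j, β), (finProdFinEquiv.symm p).1) ∈ Blk k p then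
        !(x₁ k ((j, β), (finProdFinEquiv.symm p).1)) else
        x₁ k ((j, β), (finProdFinEquiv.symm p).1)) = _
    rw [if_pos hm]
    simp only [x₁, zPat, hj, decide_true, Bool.not_false]
  · have hm : ((j, β), (finProdFinEquiv.symm p).1) ∉ Blk k p :=
      fun hmem => hj (mem_Blk k hmem).1
    show (if ((j, β), (finProdFinEquiv.symm p).1) ∈ Blk k p then
        !(x₁ k ((j, β), (finProdFinEquiv.symm p).1)) else
        x₁ k ((j, β), (finProdFinEquiv.symm p).1)) = _
    rw [if_neg hm]
    exact (decide_eq_false hj).symm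

lemma Blk_flips (p : Fin ((3*k+2)*(2*k+1))) :
    F k (flipBlock (x₁ k) (Blk k p)) ≠ F k (x₁ k) := by
  rw [F_x₁]
  have : F k (flipBlock (x₁ k) (Blk k p)) = true := by
    apply (F_eq_true k).mpr
    exact ⟨(finProdFinEquiv.symm p).1, (finProdFinEquiv.symm p).2,
      by rw [copy_flip_Blk]; exact gOne_zPat k _⟩
  rw [this]
  simp

lemma bs_ge : (3*k+2)*(2*k+1) ≤ bs (F k) := by
  have hmem : ((3*k+2)*(2*k+1) : ℕ) ∈ {b : ℕ | ∃ Bl : Fin b → Finset (Var k),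
      (Pairwise fun p q => Disjoint (Bl p) (Bl q)) ∧
      ∀ p, F k (flipBlock (x₁ k) (Bl p)) ≠ F k (x₁ k)} :=
    ⟨Blk k, Blk_disjoint k, Blk_flips k⟩
  have h1 : ((3*k+2)*(2*k+1) : ℕ) ≤ bsAt (F k) (x₁ k) := by
    unfold bsAt
    exact le_csSup ⟨(3*k+2)*(2*k+1), fun b hb => bs_mem_le k (x₁ k) hb⟩ hmem
  exact le_trans h1 (Finset.le_sup (Finset.mem_univ _))

theorem bs_F : bs (F k) = (3*k+2)*(2*k+1) := le_antisymm (bs_le k) (bs_ge k)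


/-! ### Transport along an equivalence of index types -/

section Transport

variable {ι κ : Type} [Fintype ι] [DecidableEq ι] [Fintype κ] [DecidableEq κ] (e : ι ≃ κ)

lemma flipBit_comp (y : κ → Bool) (i : ι) : (flipBit y (e i)) ∘ e = flipBit (y ∘ e) i := by
  funext a
  simp only [Function.comp_apply, flipBit, Function.update_apply]
  by_cases h : a = i
  · simp [h]
  · rw [if_neg (fun hh => h (e.injective hh)), if_neg h]

lemma sensAt_comp (f : (ι → Bool) → Bool) (y : κ → Bool) :
    sensAt (fun z => f (z ∘ e)) y = sensAt f (y ∘ e) := by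
  unfold sensAt
  symm
  apply Finset.card_equiv e
  intro i
  simp only [Finset.mem_filter, Finset.mem_univ, true_and]
  rw [← flipBit_comp e y i]

lemma sens_comp (f : (ι → Bool) → Bool) :
    sens (fun z : κ → Bool => f (z ∘ e)) = sens f := by
  unfold sens
  apply le_antisymm
  · apply Finset.sup_le
    intro y _
    rw [sensAt_comp]
    exact Finset.le_sup (Finset.mem_univ _)
  · apply Finset.sup_le
    intro x _
    have h1 : sensAt f x = sensAt (fun z : κ → Bool => f (z ∘ e)) (x ∘ e.symm) := by
      rw [sensAt_comp]
      congr 1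
      funext a
      simp
    rw [h1]
    exact Finset.le_sup (Finset.mem_univ _)

lemma flipBlock_comp (y : κ → Bool) (B : Finset κ) :
    (flipBlock y B) ∘ e = flipBlock (y ∘ e) (B.preimage e (e.injective.injOn)) := by
  funext a
  simp [flipBlock, Function.comp, Finset.mem_preimage]

lemma bsAt_comp (f : (ι → Bool) → Bool) (y : κ → Bool) :
    bsAt (fun z => f (z ∘ e)) y = bsAt f (y ∘ e) := by
  unfold bsAt
  congr 1
  ext b
  constructor
  · rintro ⟨Bl, hd, hf⟩
    refine ⟨fun p => (Bl p).preimage e (e.injective.injOn), ?_, ?_⟩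
    · intro p q hpq
      have hdd : Disjoint (Bl p) (Bl q) := hd hpq
      show Disjoint _ _
      rw [Finset.disjoint_left] at hdd ⊢
      intro a ha ha'
      rw [Finset.mem_preimage] at ha ha'
      exact hdd ha ha'
    · intro p
      rw [← flipBlock_comp]
      exact hf p
  · rintro ⟨Bl, hd, hf⟩
    refine ⟨fun p => (Bl p).map e.toEmbedding, ?_, ?_⟩
    · intro p q hpq
      have hdd : Disjoint (Bl p) (Bl q) := hd hpq
      show Disjoint _ _
      rw [Finset.disjoint_left] at hdd ⊢
      intro a ha ha'
      rw [Finset.mem_map] at ha ha'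
      obtain ⟨a1, ha1, he1⟩ := ha
      obtain ⟨a2, ha2, he2⟩ := ha'
      have : a1 = a2 := e.injective (he1.trans he2.symm)
      exact hdd ha1 (this ▸ ha2)
    · intro p
      show f ((flipBlock y ((Bl p).map e.toEmbedding)) ∘ e) ≠ f (y ∘ e)
      rw [flipBlock_comp]
      have hpre : ((Bl p).map e.toEmbedding).preimage e (e.injective.injOn) = Bl p := by
        ext a
        simp [Finset.mem_preimage]
      rw [hpre]
      exact hf p

lemma bs_comp (f : (ι → Bool) → Bool) :
    bs (fun z : κ → Bool => f (z ∘ e)) = bs f := by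
  unfold bs
  apply le_antisymm
  · apply Finset.sup_le
    intro y _
    rw [bsAt_comp]
    exact Finset.le_sup (Finset.mem_univ _)
  · apply Finset.sup_le
    intro x _
    have h1 : bsAt f x = bsAt (fun z : κ → Bool => f (z ∘ e)) (x ∘ e.symm) := by
      rw [bsAt_comp]
      congr 1
      funext a
      simp
    rw [h1]
    exact Finset.le_sup (Finset.mem_univ _)

end Transport

end TwoThirds

/-- For every `k ≥ 1` there is a Boolean function `f` on `(4k+2)(3k+2)` variables with
`s(f) = 3k+2` and `bs(f) = (2/3)·s(f)² − (1/3)·s(f)` (stated over ℕ as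
`3·bs(f) = 2·s(f)² − s(f)`). -/
theorem exists_two_thirds_separation (k : ℕ) (hk : 1 ≤ k) :
    ∃ f : (Fin ((4*k+2)*(3*k+2)) → Bool) → Bool,
      sens f = 3*k+2 ∧ 3 * bs f = 2 * (sens f)^2 - sens f := by
  have e1 : TwoThirds.Pos k ≃ Fin (4*k+2) :=
    (Equiv.prodCongr (Equiv.refl (Fin (2*k+1))) finTwoEquiv.symm).trans
      (finProdFinEquiv.trans (finCongr (by omega)))
  have e2 : TwoThirds.Var k ≃ Fin ((4*k+2)*(3*k+2)) :=
    (Equiv.prodCongr e1 (Equiv.refl (Fin (3*k+2)))).trans finProdFinEquiv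
  refine ⟨fun y => TwoThirds.F k (y ∘ e2), ?_, ?_⟩
  · rw [TwoThirds.sens_comp, TwoThirds.sens_F]
  · rw [TwoThirds.sens_comp, TwoThirds.sens_F, TwoThirds.bs_comp, TwoThirds.bs_F]
    have h : 2*(3*k+2)^2 = 3*((3*k+2)*(2*k+1)) + (3*k+2) := by ring
    omega
end

section
/- Let g : {0,1}^N → {0,1} be a Boolean function with 0-sensitivity s_0(g) = 1 and 0-block-sensitivity bs_0(g) = k. Then the 1-sensitivity of g satisfies s_1(g) ≥ 3(k−1)/2. -/
set_option linter.unusedSectionVars false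
set_option linter.unusedVariables false
set_option maxHeartbeats 1000000



section Aux
variable {ι : Type} [Fintype ι] [DecidableEq ι]

lemma flipBit_flipBlock_notMem (x : ι → Bool) {V : Finset ι} {i : ι} (h : i ∉ V) :
    flipBit (flipBlock x V) i = flipBlock x (insert i V) := by
  funext j
  by_cases hj : j = i
  · subst hj; simp [flipBit, flipBlock, Function.update, h]
  · simp [flipBit, flipBlock, Function.update, hj, Finset.mem_insert]

lemma flipBit_flipBlock_mem (x : ι → Bool) {V : Finset ι} {i : ι} (h : i ∈ V) :
    flipBit (flipBlock x V) i = flipBlock x (V.erase i) := by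
  funext j
  by_cases hj : j = i
  · subst hj; simp [flipBit, flipBlock, Function.update, h]
  · simp [flipBit, flipBlock, Function.update, hj, Finset.mem_erase]

variable (g : (ι → Bool) → Bool) (x : ι → Bool)

/-- a 0-input cannot have two sensitive bits. -/
lemma two_sens (H0 : ∀ z, g z = false → sensAt g z ≤ 1)
    {z : ι → Bool} {a b : ι} (hz : g z = false) (hab : a ≠ b)
    (ha : g (flipBit z a) = true) (hb : g (flipBit z b) = true) : False := by
  have hsub : ({a, b} : Finset ι) ⊆ Finset.univ.filter fun i => g (flipBit z i) ≠ g z := by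
    intro c hc
    rcases Finset.mem_insert.mp hc with h | h
    · subst h; simp [hz, ha]
    · have : c = b := Finset.mem_singleton.mp h
      subst this; simp [hz, hb]
  have h2 : ({a, b} : Finset ι).card = 2 := Finset.card_pair hab
  have := Finset.card_le_card hsub
  rw [h2] at this
  have h1 := H0 z hz
  unfold sensAt at h1
  omega

/-- Tower lemma. -/
lemma tower (H0 : ∀ z, g z = false → sensAt g z ≤ 1)
    {P Y : Finset ι}
    (hPtop : g (flipBlock x P) = true)
    (hPmin : ∀ S ⊂ P, g (flipBlock x S) = false)
    (hdisj : Disjoint P Y)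
    (hY : ∀ t ∈ Y, g (flipBlock x (P ∪ {t})) = true) :
    ∀ S ⊆ Y, g (flipBlock x (P ∪ S)) = true ∧
      ∀ u ∈ P, g (flipBlock x ((P.erase u) ∪ S)) = false := by
  intro S
  induction S using Finset.strongInduction with
  | _ S IH =>
    intro hSY
    constructor
    · -- (i)
      rcases S.eq_empty_or_nonempty with rfl | ⟨t, ht⟩
      · simpa using hPtop
      · by_cases hsing : S.erase t = ∅
        · have hS : S = {t} := by
            apply Finset.eq_singleton_iff_unique_mem.mpr
            refine ⟨ht, fun y hy => ?_⟩
            by_contra hne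
            exact (Finset.notMem_empty y) (hsing ▸ Finset.mem_erase.mpr ⟨hne, hy⟩)
          rw [hS]
          exact hY t (hSY ht)
        · obtain ⟨s, hs⟩ := Finset.nonempty_iff_ne_empty.mpr hsing
          have hst : s ≠ t := (Finset.mem_erase.mp hs).1
          have hsS : s ∈ S := (Finset.mem_erase.mp hs).2
          by_contra hfalse
          have hfalse : g (flipBlock x (P ∪ S)) = false := by
            cases h : g (flipBlock x (P ∪ S)) with
            | false => rfl
            | true => exact absurd h hfalse
          have key : ∀ c ∈ S, g (flipBit (flipBlock x (P ∪ S)) c) = true := by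
            intro c hc
            have hcP : c ∉ P := Finset.disjoint_right.mp hdisj (hSY hc)
            rw [flipBit_flipBlock_mem x (Finset.mem_union_right P hc)]
            have herase : (P ∪ S).erase c = P ∪ S.erase c := by
              rw [Finset.erase_union_distrib, Finset.erase_eq_of_notMem hcP]
            rw [herase]
            exact (IH (S.erase c) (Finset.erase_ssubset hc)
              ((Finset.erase_subset c S).trans hSY)).1
          exact two_sens g H0 hfalse hst (key s hsS) (key t ht)
    · -- (ii)
      intro u hu
      rcases S.eq_empty_or_nonempty with rfl | ⟨t, ht⟩
      · rw [Finset.union_empty]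
        exact hPmin _ (Finset.erase_ssubset hu)
      · set S' := S.erase t with hS'
        have hS'sub : S' ⊂ S := Finset.erase_ssubset ht
        obtain ⟨h1, h2⟩ := IH S' hS'sub ((Finset.erase_subset t S).trans hSY)
        have hz : g (flipBlock x ((P.erase u) ∪ S')) = false := h2 u hu
        have htY : t ∈ Y := hSY ht
        have htP : t ∉ P := Finset.disjoint_right.mp hdisj htY
        have hut : u ≠ t := fun h => htP (h ▸ hu)
        -- flipping u gives P ∪ S' : true
        have hfu : g (flipBit (flipBlock x ((P.erase u) ∪ S')) u) = true := by
          have hunotin : u ∉ (P.erase u) ∪ S' := by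
            simp only [Finset.mem_union, Finset.mem_erase]
            rintro (⟨h, _⟩ | h)
            · exact h rfl
            · exact (Finset.disjoint_left.mp hdisj hu)
                ((Finset.erase_subset t S).trans hSY h)
          rw [flipBit_flipBlock_notMem x hunotin]
          have : insert u ((P.erase u) ∪ S') = P ∪ S' := by
            rw [← Finset.insert_union, Finset.insert_erase hu]
          rw [this]; exact h1
        -- flipping t: target must be false
        by_contra hfalse
        have hfalse : g (flipBlock x ((P.erase u) ∪ S)) = true := by
          cases h : g (flipBlock x ((P.erase u) ∪ S)) with
          | true => rfl
          | false => exact absurd h hfalse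
        have htnotin : t ∉ (P.erase u) ∪ S' := by
          simp only [Finset.mem_union, Finset.mem_erase, hS']
          rintro (⟨_, h⟩ | ⟨h, _⟩)
          · exact htP h
          · exact h rfl
        have hft : g (flipBit (flipBlock x ((P.erase u) ∪ S')) t) = true := by
          rw [flipBit_flipBlock_notMem x htnotin]
          have : insert t ((P.erase u) ∪ S') = (P.erase u) ∪ S := by
            rw [← Finset.union_insert, hS', Finset.insert_erase ht]
          rw [this]; exact hfalse
        exact two_sens g H0 hz hut hfu hft

end Aux

section Core
variable {ι : Type} [Fintype ι] [DecidableEq ι]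
variable (g : (ι → Bool) → Bool) (x : ι → Bool)

/-- level n-2 corollary -/
lemma sub_tower (H0 : ∀ z, g z = false → sensAt g z ≤ 1)
    {P Y : Finset ι}
    (hPtop : g (flipBlock x P) = true)
    (hPmin : ∀ S ⊂ P, g (flipBlock x S) = false)
    (hdisj : Disjoint P Y)
    (hY : ∀ t ∈ Y, g (flipBlock x (P ∪ {t})) = true)
    {u w : ι} (hu : u ∈ P) (hw : w ∈ P) (huw : u ≠ w) :
    g (flipBlock x (((P.erase u).erase w) ∪ Y)) = false := by
  obtain ⟨h1, h2⟩ := tower g x H0 hPtop hPmin hdisj hY Y (le_refl _)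
  have hz : g (flipBlock x ((P.erase u) ∪ Y)) = false := h2 u hu
  have hfu : g (flipBit (flipBlock x ((P.erase u) ∪ Y)) u) = true := by
    have hunotin : u ∉ (P.erase u) ∪ Y := by
      simp only [Finset.mem_union, Finset.mem_erase]
      rintro (⟨h, _⟩ | h)
      · exact h rfl
      · exact Finset.disjoint_left.mp hdisj hu h
    rw [flipBit_flipBlock_notMem x hunotin, ← Finset.insert_union,
      Finset.insert_erase hu]
    exact h1
  by_contra hfalse
  have hfalse : g (flipBlock x (((P.erase u).erase w) ∪ Y)) = true := by
    cases h : g (flipBlock x (((P.erase u).erase w) ∪ Y)) with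
    | true => rfl
    | false => exact absurd h hfalse
  have hwmem : w ∈ (P.erase u) ∪ Y :=
    Finset.mem_union_left _ (Finset.mem_erase.mpr ⟨fun h => huw h.symm, hw⟩)
  have hfw : g (flipBit (flipBlock x ((P.erase u) ∪ Y)) w) = true := by
    rw [flipBit_flipBlock_mem x hwmem]
    have : ((P.erase u) ∪ Y).erase w = ((P.erase u).erase w) ∪ Y := by
      rw [Finset.erase_union_distrib,
        Finset.erase_eq_of_notMem (Finset.disjoint_left.mp hdisj hw)]
    rw [this]; exact hfalse
  exact two_sens g H0 hz huw hfu hfw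

/-- MPL3: pivots on both sides lead to contradiction -/
lemma mpl3 (H0 : ∀ z, g z = false → sensAt g z ≤ 1)
    {P Q : Finset ι} (hPQ : Disjoint P Q)
    (hPtop : g (flipBlock x P) = true) (hPmin : ∀ S ⊂ P, g (flipBlock x S) = false)
    (hQtop : g (flipBlock x Q) = true) (hQmin : ∀ S ⊂ Q, g (flipBlock x S) = false)
    {u t : ι} (hu : u ∈ P) (ht : t ∈ Q)
    (hP : ∀ s ∈ Q.erase t, g (flipBlock x (P ∪ {s})) = true)
    (hQ : ∀ s ∈ P.erase u, g (flipBlock x (Q ∪ {s})) = true) : False := by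
  have hdisj1 : Disjoint P (Q.erase t) := hPQ.mono_right (Finset.erase_subset t Q)
  have hdisj2 : Disjoint Q (P.erase u) := hPQ.symm.mono_right (Finset.erase_subset u P)
  obtain ⟨h1, h2⟩ := tower g x H0 hPtop hPmin hdisj1 hP (Q.erase t) (le_refl _)
  obtain ⟨h1', _⟩ := tower g x H0 hQtop hQmin hdisj2 hQ (P.erase u) (le_refl _)
  have hz : g (flipBlock x ((P.erase u) ∪ (Q.erase t))) = false := h2 u hu
  have hut : u ≠ t := fun h => Finset.disjoint_left.mp hPQ hu (h ▸ ht)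
  have hfu : g (flipBit (flipBlock x ((P.erase u) ∪ (Q.erase t))) u) = true := by
    have hunotin : u ∉ (P.erase u) ∪ (Q.erase t) := by
      simp only [Finset.mem_union, Finset.mem_erase]
      rintro (⟨h, _⟩ | ⟨_, h⟩)
      · exact h rfl
      · exact Finset.disjoint_left.mp hPQ hu h
    rw [flipBit_flipBlock_notMem x hunotin, ← Finset.insert_union,
      Finset.insert_erase hu]
    exact h1
  have hft : g (flipBit (flipBlock x ((P.erase u) ∪ (Q.erase t))) t) = true := by
    have htnotin : t ∉ (P.erase u) ∪ (Q.erase t) := by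
      simp only [Finset.mem_union, Finset.mem_erase]
      rintro (⟨_, h⟩ | ⟨h, _⟩)
      · exact Finset.disjoint_left.mp hPQ h ht
      · exact h rfl
    rw [flipBit_flipBlock_notMem x htnotin, ← Finset.union_insert,
      Finset.insert_erase ht, Finset.union_comm]
    exact h1'
  exact two_sens g H0 hz hut hfu hft

/-- MPL2 core -/
lemma mpl2 (H0 : ∀ z, g z = false → sensAt g z ≤ 1)
    {P Q : Finset ι} (hPQ : Disjoint P Q)
    (hPtop : g (flipBlock x P) = true) (hPmin : ∀ S ⊂ P, g (flipBlock x S) = false)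
    (hQtop : g (flipBlock x Q) = true) (hQmin : ∀ S ⊂ Q, g (flipBlock x S) = false)
    (hP0 : ∀ t ∈ Q, g (flipBlock x (P ∪ {t})) = true)
    {u w : ι} (hu : u ∈ P) (hw : w ∈ P) (huw : u ≠ w)
    (hS0 : ∀ a ∈ (P.erase u).erase w, g (flipBlock x (Q ∪ {a})) = true) : False := by
  have hst := sub_tower g x H0 hPtop hPmin hPQ hP0 hu hw huw
  have hdisj : Disjoint Q ((P.erase u).erase w) :=
    hPQ.symm.mono_right (((P.erase u).erase_subset w).trans (P.erase_subset u))
  obtain ⟨h1, _⟩ := tower g x H0 hQtop hQmin hdisj hS0 ((P.erase u).erase w) (le_refl _)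
  rw [Finset.union_comm] at h1
  rw [h1] at hst
  exact absurd hst (by simp)

end Core

section Count
variable {ι : Type} [Fintype ι] [DecidableEq ι]
variable (g : (ι → Bool) → Bool) (x : ι → Bool)

/-- number of bits of Q sensitive at the top of P -/
def fPQ (P Q : Finset ι) : ℕ :=
  (Q.filter fun t => g (flipBlock x (P ∪ {t})) = false).card

lemma pivot_extract {Q : Finset ι} (hQ : Q.Nonempty) {pred : ι → Prop} [DecidablePred pred]
    (h : (Q.filter pred).card ≤ 1) :
    ∃ t ∈ Q, ∀ s ∈ Q.erase t, ¬ pred s := by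
  rcases (Q.filter pred).eq_empty_or_nonempty with he | ⟨t, ht⟩
  · obtain ⟨t, ht⟩ := hQ
    refine ⟨t, ht, fun s hs hp => ?_⟩
    have : s ∈ Q.filter pred := Finset.mem_filter.mpr ⟨(Finset.mem_erase.mp hs).2, hp⟩
    rw [he] at this
    exact Finset.notMem_empty s this
  · refine ⟨t, (Finset.mem_filter.mp ht).1, fun s hs hp => ?_⟩
    have hsf : s ∈ Q.filter pred := Finset.mem_filter.mpr ⟨(Finset.mem_erase.mp hs).2, hp⟩
    have := Finset.card_le_one.mp h s hsf t ht
    exact (Finset.mem_erase.mp hs).1 this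

lemma insens_of_not_sens {P : Finset ι} {s : ι}
    (h : ¬ (g (flipBlock x (P ∪ {s})) = false)) : g (flipBlock x (P ∪ {s})) = true := by
  cases hv : g (flipBlock x (P ∪ {s})) with
  | true => rfl
  | false => exact absurd hv h

/-- singleton blocks: f ≥ 2 -/
lemma singleton_f_ge_two (H0 : ∀ z, g z = false → sensAt g z ≤ 1)
    {P Q : Finset ι} (hPQ : Disjoint P Q)
    (hPtop : g (flipBlock x P) = true) (hPmin : ∀ S ⊂ P, g (flipBlock x S) = false)
    (hQtop : g (flipBlock x Q) = true) (hQmin : ∀ S ⊂ Q, g (flipBlock x S) = false)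
    (hQne : Q.Nonempty)
    {p : ι} (hPp : P = {p}) :
    2 ≤ fPQ g x P Q := by
  by_contra hlt
  have h1 : fPQ g x P Q ≤ 1 := by omega
  obtain ⟨t, ht, hpi⟩ := pivot_extract hQne h1
  refine mpl3 g x H0 hPQ hPtop hPmin hQtop hQmin (hPp ▸ Finset.mem_singleton_self p) ht
    (fun s hs => insens_of_not_sens g x (hpi s hs)) (fun s hs => ?_)
  rw [hPp] at hs
  simp at hs

/-- f_PQ = 0 with |P| ≥ 2 implies f_QP ≥ 3 -/
lemma f_zero_imp_three (H0 : ∀ z, g z = false → sensAt g z ≤ 1)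
    {P Q : Finset ι} (hPQ : Disjoint P Q)
    (hPtop : g (flipBlock x P) = true) (hPmin : ∀ S ⊂ P, g (flipBlock x S) = false)
    (hQtop : g (flipBlock x Q) = true) (hQmin : ∀ S ⊂ Q, g (flipBlock x S) = false)
    (hP2 : 2 ≤ P.card)
    (h0 : fPQ g x P Q = 0) :
    3 ≤ fPQ g x Q P := by
  by_contra hlt
  have hSP : (P.filter fun a => g (flipBlock x (Q ∪ {a})) = false).card ≤ 2 := by
    unfold fPQ at hlt; omega
  set SP := P.filter fun a => g (flipBlock x (Q ∪ {a})) = false with hSPdef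
  -- find u ≠ w in P with SP ⊆ {u, w}
  have hex : ∃ u w, u ∈ P ∧ w ∈ P ∧ u ≠ w ∧ SP ⊆ {u, w} := by
    rcases Nat.lt_or_ge SP.card 2 with h2 | h2
    · -- card ≤ 1
      rcases SP.eq_empty_or_nonempty with he | ⟨a, ha⟩
      · obtain ⟨u, hu, w, hw, huw⟩ := Finset.one_lt_card.mp hP2
        exact ⟨u, w, hu, hw, huw, by rw [he]; exact Finset.empty_subset _⟩
      · have haP : a ∈ P := Finset.mem_of_mem_filter a ha
        obtain ⟨w, hw, hwa⟩ := Finset.exists_mem_ne hP2 a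
        refine ⟨a, w, haP, hw, fun h => hwa h.symm, fun b hb => ?_⟩
        have : b = a := Finset.card_le_one.mp (by omega) b hb a ha
        simp [this]
    · -- card = 2
      obtain ⟨u, w, huw, hSP2⟩ := Finset.card_eq_two.mp (le_antisymm hSP h2)
      have hsub : SP ⊆ P := Finset.filter_subset _ _
      refine ⟨u, w, hsub (hSP2 ▸ Finset.mem_insert_self u {w}),
        hsub (hSP2 ▸ Finset.mem_insert_of_mem (Finset.mem_singleton_self w)), huw,
        hSP2 ▸ le_refl _⟩
  obtain ⟨u, w, hu, hw, huw, hcov⟩ := hex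
  have hP0 : ∀ t ∈ Q, g (flipBlock x (P ∪ {t})) = true := by
    intro t ht
    apply insens_of_not_sens g x
    intro hf
    have : t ∈ Q.filter fun t => g (flipBlock x (P ∪ {t})) = false :=
      Finset.mem_filter.mpr ⟨ht, hf⟩
    rw [Finset.card_eq_zero.mp h0] at this
    exact Finset.notMem_empty t this
  refine mpl2 g x H0 hPQ hPtop hPmin hQtop hQmin hP0 hu hw huw (fun a ha => ?_)
  apply insens_of_not_sens g x
  intro hf
  have haP : a ∈ P := (P.erase_subset u) (((P.erase u).erase_subset w) ha)
  have : a ∈ SP := Finset.mem_filter.mpr ⟨haP, hf⟩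
  have := hcov this
  simp only [Finset.mem_insert, Finset.mem_singleton] at this
  rcases this with rfl | rfl
  · exact (Finset.mem_erase.mp ((Finset.erase_subset w _) ha)).1 rfl
  · exact (Finset.mem_erase.mp ha).1 rfl

/-- f ≥ 2 on one side or other side ≥ 2 : exclusion of (≤1, ≤1) -/
lemma not_both_le_one (H0 : ∀ z, g z = false → sensAt g z ≤ 1)
    {P Q : Finset ι} (hPQ : Disjoint P Q)
    (hPtop : g (flipBlock x P) = true) (hPmin : ∀ S ⊂ P, g (flipBlock x S) = false)
    (hQtop : g (flipBlock x Q) = true) (hQmin : ∀ S ⊂ Q, g (flipBlock x S) = false)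
    (hPne : P.Nonempty) (hQne : Q.Nonempty)
    (h1 : fPQ g x P Q ≤ 1) (h2 : fPQ g x Q P ≤ 1) : False := by
  obtain ⟨t, ht, hpit⟩ := pivot_extract hQne h1
  obtain ⟨u, hu, hpiu⟩ := pivot_extract hPne h2
  exact mpl3 g x H0 hPQ hPtop hPmin hQtop hQmin hu ht
    (fun s hs => insens_of_not_sens g x (hpit s hs))
    (fun s hs => insens_of_not_sens g x (hpiu s hs))

/-- main pair bound : f_PQ + f_QP + ind(P) + ind(Q) ≥ 3 -/
lemma pair_bound (H0 : ∀ z, g z = false → sensAt g z ≤ 1)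
    {P Q : Finset ι} (hPQ : Disjoint P Q)
    (hPtop : g (flipBlock x P) = true) (hPmin : ∀ S ⊂ P, g (flipBlock x S) = false)
    (hQtop : g (flipBlock x Q) = true) (hQmin : ∀ S ⊂ Q, g (flipBlock x S) = false)
    (hPne : P.Nonempty) (hQne : Q.Nonempty) :
    3 ≤ fPQ g x P Q + fPQ g x Q P
      + (if P.card = 1 then 1 else 0) + (if Q.card = 1 then 1 else 0) := by
  by_cases hp1 : P.card = 1
  · obtain ⟨p, hp⟩ := Finset.card_eq_one.mp hp1
    have := singleton_f_ge_two g x H0 hPQ hPtop hPmin hQtop hQmin hQne hp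
    simp only [hp1, if_pos]
    omega
  · by_cases hq1 : Q.card = 1
    · obtain ⟨q, hq⟩ := Finset.card_eq_one.mp hq1
      have := singleton_f_ge_two g x H0 hPQ.symm hQtop hQmin hPtop hPmin hPne hq
      simp only [hq1, if_pos]
      omega
    · have hP2 : 2 ≤ P.card := by
        have := Finset.card_pos.mpr hPne; omega
      have hQ2 : 2 ≤ Q.card := by
        have := Finset.card_pos.mpr hQne; omega
      simp only [hp1, hq1, if_neg, Nat.add_zero]
      rcases Nat.eq_zero_or_pos (fPQ g x P Q) with h0 | hpos
      · have := f_zero_imp_three g x H0 hPQ hPtop hPmin hQtop hQmin hP2 h0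
        omega
      · rcases Nat.eq_zero_or_pos (fPQ g x Q P) with h0' | hpos'
        · have := f_zero_imp_three g x H0 hPQ.symm hQtop hQmin hPtop hPmin hQ2 h0'
          omega
        · by_contra hlt
          exact not_both_le_one g x H0 hPQ hPtop hPmin hQtop hQmin hPne hQne
            (by omega) (by omega)

end Count

section Global
variable {ι : Type} [Fintype ι] [DecidableEq ι]
variable (g : (ι → Bool) → Bool) (x : ι → Bool)

/-- per-top sensitivity lower bound -/
lemma top_sens_ge (H0 : ∀ z, g z = false → sensAt g z ≤ 1)
    {k : ℕ} (Bl : Fin k → Finset ι)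
    (hdisj : Pairwise fun p q => Disjoint (Bl p) (Bl q))
    (htop : ∀ p, g (flipBlock x (Bl p)) = true)
    (hmin : ∀ p, ∀ S ⊂ Bl p, g (flipBlock x S) = false)
    (i : Fin k) :
    (Bl i).card + ∑ j ∈ Finset.univ.erase i, fPQ g x (Bl i) (Bl j)
      ≤ sensAt g (flipBlock x (Bl i)) := by
  classical
  set T := flipBlock x (Bl i) with hT
  set G : Finset ι := Bl i ∪ (Finset.univ.erase i).biUnion
      (fun j => (Bl j).filter fun t => g (flipBlock x (Bl i ∪ {t})) = false) with hG
  have hsub : G ⊆ Finset.univ.filter fun c => g (flipBit T c) ≠ g T := by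
    intro c hc
    refine Finset.mem_filter.mpr ⟨Finset.mem_univ c, ?_⟩
    rcases Finset.mem_union.mp hc with hcB | hcU
    · rw [hT, flipBit_flipBlock_mem x hcB, hmin i _ (Finset.erase_ssubset hcB),
        htop i]
      simp
    · obtain ⟨j, hj, hcj⟩ := Finset.mem_biUnion.mp hcU
      have hji : j ≠ i := (Finset.mem_erase.mp hj).1
      obtain ⟨hcBj, hval⟩ := Finset.mem_filter.mp hcj
      have hcBi : c ∉ Bl i := Finset.disjoint_left.mp (hdisj hji) hcBj
      rw [hT, flipBit_flipBlock_notMem x hcBi]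
      have : insert c (Bl i) = Bl i ∪ {c} := by
        rw [Finset.union_comm, Finset.insert_eq]
      rw [this, hval, htop i]
      simp
  have hGcard : G.card = (Bl i).card
      + ∑ j ∈ Finset.univ.erase i, fPQ g x (Bl i) (Bl j) := by
    rw [hG, Finset.card_union_of_disjoint, Finset.card_biUnion]
    · rfl
    · intro p hp q hq hpq
      exact Finset.disjoint_filter_filter (hdisj hpq)
    · rw [Finset.disjoint_biUnion_right]
      intro j hj
      exact (hdisj ((Finset.mem_erase.mp hj).1.symm)).mono_right (Finset.filter_subset _ _)
  calc (Bl i).card + ∑ j ∈ Finset.univ.erase i, fPQ g x (Bl i) (Bl j)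
      = G.card := hGcard.symm
    _ ≤ _ := Finset.card_le_card hsub

/-- the main combinatorial bound -/
lemma main_bound (H0 : ∀ z, g z = false → sensAt g z ≤ 1)
    {k : ℕ} (Bl : Fin k → Finset ι)
    (hdisj : Pairwise fun p q => Disjoint (Bl p) (Bl q))
    (htop : ∀ p, g (flipBlock x (Bl p)) = true)
    (hmin : ∀ p, ∀ S ⊂ Bl p, g (flipBlock x S) = false)
    (hne : ∀ p, (Bl p).Nonempty) :
    3 * (k - 1) ≤ 2 * sens1 g := by
  classical
  rcases Nat.eq_zero_or_pos k with rfl | hk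
  · simp
  obtain ⟨m, rfl⟩ : ∃ m, k = m + 1 := ⟨k - 1, by omega⟩
  have hc : ∀ i : Fin (m+1), (Finset.univ.erase i).card = m := fun i => by
    rw [Finset.card_erase_of_mem (Finset.mem_univ i), Finset.card_univ, Fintype.card_fin]
    omega
  set s1 := sens1 g with hs1
  set A := ∑ i : Fin (m+1), (Bl i).card with hA
  set W := ∑ i : Fin (m+1), ∑ j ∈ Finset.univ.erase i, fPQ g x (Bl i) (Bl j) with hW
  set σ := (Finset.univ.filter fun i : Fin (m+1) => (Bl i).card = 1).card with hσ
  -- at most one singleton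
  have hσ1 : σ ≤ 1 := by
    rw [hσ]
    apply Finset.card_le_one.mpr
    intro a ha b hb
    by_contra hab
    have hab' : a ≠ b := hab
    have h2 := singleton_f_ge_two g x H0 (hdisj hab') (htop a) (hmin a) (htop b) (hmin b)
      (hne b) (Finset.card_eq_one.mp (Finset.mem_filter.mp ha).2).choose_spec
    have : fPQ g x (Bl a) (Bl b) ≤ (Bl b).card :=
      Finset.card_le_card (Finset.filter_subset _ _)
    rw [(Finset.mem_filter.mp hb).2] at this
    omega
  -- A + σ ≥ 2 k
  have hAσ : 2 * (m+1) ≤ A + σ := by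
    have : ∀ i : Fin (m+1), 2 ≤ (Bl i).card + (if (Bl i).card = 1 then 1 else 0) := by
      intro i
      have h1 := Finset.card_pos.mpr (hne i)
      by_cases h : (Bl i).card = 1
      · simp [h]
      · simp [h]; omega
    calc 2 * (m+1) = ∑ _i : Fin (m+1), 2 := by
          rw [Finset.sum_const, Finset.card_univ, Fintype.card_fin]; ring
      _ ≤ ∑ i : Fin (m+1), ((Bl i).card + (if (Bl i).card = 1 then 1 else 0)) :=
          Finset.sum_le_sum (fun i _ => this i)
      _ = A + σ := by
          rw [Finset.sum_add_distrib, hA, hσ, Finset.card_filter]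
  -- pair sums via swap
  have hswap : (∑ i : Fin (m+1), ∑ j ∈ Finset.univ.erase i, fPQ g x (Bl j) (Bl i)) = W := by
    rw [hW]
    exact Finset.sum_comm' (fun a b => by
      simp only [Finset.mem_univ, Finset.mem_erase, and_true, true_and]
      exact ne_comm)
  have hswap2 : (∑ i : Fin (m+1), ∑ j ∈ Finset.univ.erase i,
      (if (Bl j).card = 1 then 1 else 0)) = m * σ := by
    have := Finset.sum_comm' (s := (Finset.univ : Finset (Fin (m+1))))
      (t := fun i => Finset.univ.erase i) (t' := Finset.univ)
      (s' := fun j => Finset.univ.erase j)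
      (f := fun _i j => if (Bl j).card = 1 then (1:ℕ) else 0)
      (fun a b => by
        simp only [Finset.mem_univ, Finset.mem_erase, and_true, true_and]
        exact ne_comm)
    rw [this]
    rw [hσ, Finset.card_filter, Finset.mul_sum]
    apply Finset.sum_congr rfl
    intro j _
    rw [Finset.sum_const, hc j, smul_eq_mul]
  have hWσ : 3 * ((m+1) * m) ≤ 2 * W + 2 * (m * σ) := by
    have hpair : ∀ i : Fin (m+1), ∀ j ∈ Finset.univ.erase i,
        3 ≤ fPQ g x (Bl i) (Bl j) + fPQ g x (Bl j) (Bl i)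
          + ((if (Bl i).card = 1 then 1 else 0) + (if (Bl j).card = 1 then 1 else 0)) := by
      intro i j hj
      have hij : i ≠ j := ((Finset.mem_erase.mp hj).1).symm
      have := pair_bound g x H0 (hdisj hij) (htop i) (hmin i) (htop j) (hmin j)
        (hne i) (hne j)
      omega
    have hsum : 3 * ((m+1) * m)
        ≤ ∑ i : Fin (m+1), ∑ j ∈ Finset.univ.erase i,
            (fPQ g x (Bl i) (Bl j) + fPQ g x (Bl j) (Bl i)
              + ((if (Bl i).card = 1 then 1 else 0) + (if (Bl j).card = 1 then 1 else 0))) := by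
      calc 3 * ((m+1) * m) = ∑ _i : Fin (m+1), ∑ _j ∈ (Finset.univ.erase _i), 3 := by
            rw [Finset.sum_congr rfl (fun i _ => by
              rw [Finset.sum_const, hc i, smul_eq_mul])]
            rw [Finset.sum_const, Finset.card_univ, Fintype.card_fin, smul_eq_mul]
            ring
        _ ≤ _ := Finset.sum_le_sum (fun i _ => Finset.sum_le_sum (hpair i))
    have hsplit : ∑ i : Fin (m+1), ∑ j ∈ Finset.univ.erase i,
            (fPQ g x (Bl i) (Bl j) + fPQ g x (Bl j) (Bl i)
              + ((if (Bl i).card = 1 then 1 else 0) + (if (Bl j).card = 1 then 1 else 0)))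
        = W + W + (m * σ + m * σ) := by
      have hconst : (∑ i : Fin (m+1), ∑ _j ∈ Finset.univ.erase i,
          (if (Bl i).card = 1 then (1:ℕ) else 0)) = m * σ := by
        rw [Finset.sum_congr rfl (fun i _ => by
          rw [Finset.sum_const, hc i, smul_eq_mul])]
        rw [hσ, Finset.card_filter, Finset.mul_sum]
      simp only [Finset.sum_add_distrib]
      rw [hswap, hswap2, hconst, ← hW]
    omega
  -- sum of top sensitivities
  have htopsum : A + W ≤ (m+1) * s1 := by
    have h1 : ∀ i : Fin (m+1),
        (Bl i).card + ∑ j ∈ Finset.univ.erase i, fPQ g x (Bl i) (Bl j)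
          ≤ sensAt g (flipBlock x (Bl i)) :=
      top_sens_ge g x H0 Bl hdisj htop hmin
    have h2 : ∀ i : Fin (m+1), sensAt g (flipBlock x (Bl i)) ≤ s1 := by
      intro i
      rw [hs1]
      exact Finset.le_sup (Finset.mem_filter.mpr ⟨Finset.mem_univ _, htop i⟩)
    calc A + W = ∑ i : Fin (m+1),
          ((Bl i).card + ∑ j ∈ Finset.univ.erase i, fPQ g x (Bl i) (Bl j)) := by
          rw [hA, hW, Finset.sum_add_distrib]
      _ ≤ ∑ _i : Fin (m+1), s1 :=
          Finset.sum_le_sum (fun i _ => le_trans (h1 i) (h2 i))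
      _ = (m+1) * s1 := by
          rw [Finset.sum_const, Finset.card_univ, Fintype.card_fin]; ring
  -- final arithmetic
  have key : (m+1) * (3*m+4) ≤ (m+1) * (2*s1+2) := by nlinarith
  have := Nat.le_of_mul_le_mul_left key (by omega : 0 < m+1)
  simp only [Nat.add_sub_cancel]
  omega

end Global

section Glue
variable {ι : Type} [Fintype ι] [DecidableEq ι]

lemma flipBlock_empty (x : ι → Bool) : flipBlock x (∅ : Finset ι) = x := by
  funext j; simp [flipBlock]

lemma exists_min_block (g : (ι → Bool) → Bool) (x : ι → Bool) :
    ∀ B : Finset ι, g (flipBlock x B) = true →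
      ∃ B' ⊆ B, g (flipBlock x B') = true ∧ ∀ S ⊂ B', g (flipBlock x S) = false := by
  intro B
  induction B using Finset.strongInduction with
  | _ B IH =>
    intro hB
    by_cases h : ∀ S ⊂ B, g (flipBlock x S) = false
    · exact ⟨B, le_refl _, hB, h⟩
    · push_neg at h
      obtain ⟨S, hS, hSval⟩ := h
      have hSval : g (flipBlock x S) = true := by
        cases hv : g (flipBlock x S) with
        | true => rfl
        | false => exact absurd hv hSval
      obtain ⟨B', hB'S, hgood⟩ := IH S hS hSval
      exact ⟨B', hB'S.trans hS.subset, hgood⟩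

end Glue

/-- If `g : {0,1}^N → {0,1}` (attaining both values) has `s₀(g) = 1` and `bs₀(g) = k`,
then `s₁(g) ≥ 3(k−1)/2`, stated over ℕ as `3·(k−1) ≤ 2·s₁(g)`. -/
theorem sens1_ge_of_sens0_eq_one {N : ℕ} (g : (Fin N → Bool) → Bool)
    (hg0 : ∃ x, g x = false) (hg1 : ∃ x, g x = true)
    (hs0 : sens0 g = 1) (k : ℕ) (hbs0 : bs0 g = k) :
    3 * (k - 1) ≤ 2 * sens1 g := by
  classical
  have H0 : ∀ z, g z = false → sensAt g z ≤ 1 := by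
    intro z hz
    have h : sensAt g z ≤ sens0 g := Finset.le_sup (by simp [hz])
    rw [hs0] at h
    exact h
  rcases Nat.eq_zero_or_pos k with rfl | hk
  · simp
  -- find a 0-input attaining bs0
  obtain ⟨x0, hx0mem, hx0⟩ :=
    Finset.exists_mem_eq_sup (Finset.univ.filter fun x => g x = false)
      (by
        obtain ⟨x, hx⟩ := hg0
        exact ⟨x, Finset.mem_filter.mpr ⟨Finset.mem_univ x, hx⟩⟩)
      (bsAt g)
  have hgx0 : g x0 = false := (Finset.mem_filter.mp hx0mem).2
  rw [← hbs0] at *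
  have hbsx0 : bsAt g x0 = bs0 g := hx0.symm
  -- the defining set of bsAt
  set Sset : Set ℕ := {b : ℕ | ∃ Bl : Fin b → Finset (Fin N),
    (Pairwise fun p q => Disjoint (Bl p) (Bl q)) ∧
    ∀ p, g (flipBlock x0 (Bl p)) ≠ g x0} with hSset
  have hSne : Sset.Nonempty := ⟨0, Fin.elim0, by
    constructor
    · intro p; exact p.elim0
    · intro p; exact p.elim0⟩
  have hSbdd : BddAbove Sset := by
    refine ⟨Fintype.card (Fin N), fun b hb => ?_⟩
    obtain ⟨Bl, hdisj, hval⟩ := hb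
    have hne : ∀ p, (Bl p).Nonempty := by
      intro p
      rcases (Bl p).eq_empty_or_nonempty with he | h
      · exfalso; apply hval p; rw [he, flipBlock_empty]
      · exact h
    have hinj : Function.Injective (fun p : Fin b => (hne p).choose) := by
      intro p q hpq
      simp only at hpq
      by_contra hne2
      have h1 := (hne p).choose_spec
      have h2 := (hne q).choose_spec
      rw [← hpq] at h2
      exact Finset.disjoint_left.mp (hdisj hne2) h1 h2
    calc b = Fintype.card (Fin b) := (Fintype.card_fin b).symm
      _ ≤ Fintype.card (Fin N) := Fintype.card_le_of_injective _ hinj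
  have hmem : bs0 g ∈ Sset := by
    have : bsAt g x0 = sSup Sset := rfl
    rw [← hbsx0, this]
    exact Nat.sSup_mem hSne hSbdd
  obtain ⟨Bl, hdisj, hval⟩ := hmem
  have htop : ∀ p, g (flipBlock x0 (Bl p)) = true := by
    intro p
    cases hv : g (flipBlock x0 (Bl p)) with
    | true => rfl
    | false => exact absurd (hgx0 ▸ hv) (hval p)
  -- minimalize blocks
  have hmin' : ∀ p, ∃ B' ⊆ Bl p, g (flipBlock x0 B') = true ∧
      ∀ S ⊂ B', g (flipBlock x0 S) = false :=
    fun p => exists_min_block g x0 (Bl p) (htop p)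
  choose Bl' hsub htop' hmin using hmin'
  have hdisj' : Pairwise fun p q => Disjoint (Bl' p) (Bl' q) :=
    fun p q hpq => ((hdisj hpq).mono (hsub p) (hsub q))
  have hne' : ∀ p, (Bl' p).Nonempty := by
    intro p
    rcases (Bl' p).eq_empty_or_nonempty with he | h
    · exfalso
      have := htop' p
      rw [he, flipBlock_empty, hgx0] at this
      exact absurd this (by simp)
    · exact h
  exact main_bound g x0 H0 Bl' hdisj' htop' hmin hne'
end
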